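/- arXiv:2310.03601 — 3 statements merged into one kernel-verified Lean document; each statement's English description precedes it below -/
import Mathlib

section
/- Every finite 2k-edge-connected multigraph has an orientation in which, from any vertex v to any other vertex w, there exist k arc-disjoint directed paths from v to w. -/
namespace NW
open Classical
noncomputable section

/-- A multigraph on vertex type `V` with edge type `E`: each edge has two endpoints
(given with an arbitrary reference direction). -/
structure Multigraph (V : Type) (E : Type) where
  fst : E → V
  snd : E → V

namespace Multigraph

variable {V E : Type}

/-- Source of an oriented step `(e, b)`: traversing `e` forwards if `b = true`. -/
def src (G : Multigraph V E) (s : E × Bool) : V := if s.2 then G.fst s.1 else G.snd s.1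

/-- Target of an oriented step. -/
def dst (G : Multigraph V E) (s : E × Bool) : V := if s.2 then G.snd s.1 else G.fst s.1

/-- `l` is a walk from `x` to `y` (a list of oriented steps). -/
def IsWalk (G : Multigraph V E) (x y : V) (l : List (E × Bool)) : Prop :=
  l.Chain' (fun s t => G.dst s = G.src t) ∧
  ((l = [] ∧ x = y) ∨
    (∃ s t, l.head? = some s ∧ l.getLast? = some t ∧ G.src s = x ∧ G.dst t = y))

/-- A trail: a walk with pairwise distinct edges. -/
def IsTrail (G : Multigraph V E) (x y : V) (l : List (E × Bool)) : Prop :=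
  G.IsWalk x y l ∧ (l.map Prod.fst).Nodup

/-- There exist `m` pairwise edge-disjoint `x`–`y` paths. -/
def ConnAtLeast (G : Multigraph V E) (x y : V) (m : ℕ) : Prop :=
  ∃ f : Fin m → List (E × Bool),
    (∀ i, G.IsTrail x y (f i)) ∧
    ∀ i j, i ≠ j → ((f i).map Prod.fst).Disjoint ((f j).map Prod.fst)

/-- The local edge-connectivity `λ(x,y)`. -/
noncomputable def lam (G : Multigraph V E) (x y : V) : ℕ :=
  sSup {m | G.ConnAtLeast x y m}

/-- `λ*(x,y)`: greatest even number not exceeding `λ(x,y)`. -/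
noncomputable def lamStar (G : Multigraph V E) (x y : V) : ℕ :=
  2 * (G.lam x y / 2)

/-- Edge boundary `δ(X)`. -/
def cut (G : Multigraph V E) (X : Set V) : Set E :=
  {e | (G.fst e ∈ X ∧ G.snd e ∉ X) ∨ (G.fst e ∉ X ∧ G.snd e ∈ X)}

/-- `E(X,Y)`: edges with one end in `X` and the other in `Y`. -/
def between (G : Multigraph V E) (X Y : Set V) : Set E :=
  {e | (G.fst e ∈ X ∧ G.snd e ∈ Y) ∨ (G.fst e ∈ Y ∧ G.snd e ∈ X)}

/-- Degree of a vertex. -/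
noncomputable def deg (G : Multigraph V E) (v : V) : ℕ :=
  {e | G.fst e = v}.ncard + {e | G.snd e = v}.ncard

/-- `e` is incident with `v`. -/
def Inc (G : Multigraph V E) (e : E) (v : V) : Prop := G.fst e = v ∨ G.snd e = v

/-- `k`-edge-connectedness: every nonempty proper vertex set has boundary of size at least `k`. -/
def EdgeConnected (G : Multigraph V E) (k : ℕ) : Prop :=
  ∀ X : Set V, X.Nonempty → Xᶜ.Nonempty → k ≤ (G.cut X).ncard

/-- Tail of edge `e` under the orientation `o`. -/
def tailO (G : Multigraph V E) (o : E → Bool) (e : E) : V := if o e then G.fst e else G.snd e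

/-- Head of edge `e` under the orientation `o`. -/
def headO (G : Multigraph V E) (o : E → Bool) (e : E) : V := if o e then G.snd e else G.fst e

/-- Directed walk from `x` to `y` in the orientation `o`. -/
def IsDiWalk (G : Multigraph V E) (o : E → Bool) (x y : V) (l : List E) : Prop :=
  l.Chain' (fun e f => G.headO o e = G.tailO o f) ∧
  ((l = [] ∧ x = y) ∨
    (∃ e f, l.head? = some e ∧ l.getLast? = some f ∧ G.tailO o e = x ∧ G.headO o f = y))

/-- There exist `m` pairwise arc-disjoint directed paths from `x` to `y`. -/
def DiConnAtLeast (G : Multigraph V E) (o : E → Bool) (x y : V) (m : ℕ) : Prop :=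
  ∃ g : Fin m → List E,
    (∀ i, G.IsDiWalk o x y (g i) ∧ (g i).Nodup) ∧
    ∀ i j, i ≠ j → (g i).Disjoint (g j)

/-- A well-balanced orientation. -/
def WellBalanced (G : Multigraph V E) (o : E → Bool) : Prop :=
  ∀ x y : V, x ≠ y → G.DiConnAtLeast o x y (G.lamStar x y / 2)

def Reachable (G : Multigraph V E) (x y : V) : Prop := ∃ l, G.IsWalk x y l

def Connected (G : Multigraph V E) : Prop := ∀ x y, G.Reachable x y

/-- `e` is a bridge: its endpoints cannot be joined avoiding `e`. -/
def IsBridge (G : Multigraph V E) (e : E) : Prop :=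
  ¬ ∃ l, G.IsWalk (G.fst e) (G.snd e) l ∧ e ∉ l.map Prod.fst

/-- The endpoint of `e` other than `s`. -/
def other (G : Multigraph V E) (s : V) (e : E) : V :=
  if G.fst e = s then G.snd e else G.fst e

/-- Lifting the edges `e1, e2` at `s`: delete both, add a new edge (reusing the name `e1`)
joining their other endpoints. -/
def lift (G : Multigraph V E) (s : V) (e1 e2 : E) : Multigraph V {e : E // e ≠ e2} where
  fst := fun e => if e.1 = e1 then G.other s e1 else G.fst e.1
  snd := fun e => if e.1 = e1 then G.other s e2 else G.snd e.1

/-- The pair `e1, e2` at `s` is `τ`-admissible. -/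
def Admissible (G : Multigraph V E) (s : V) (τ : V → V → ℕ) (e1 e2 : E) : Prop :=
  ∀ x y : V, x ≠ s → y ≠ s → (G.lift s e1 e2).ConnAtLeast x y (τ x y)

/-- The lifting graph `L(G,s,τ)` on the edges incident with `s`. -/
def LiftingGraph (G : Multigraph V E) (s : V) (τ : V → V → ℕ) :
    SimpleGraph {e : E // G.Inc e s} where
  Adj e f := e ≠ f ∧ (G.Admissible s τ e.1 f.1 ∨ G.Admissible s τ f.1 e.1)
  symm := ⟨fun _ _ h => ⟨h.1.symm, h.2.symm⟩⟩
  loopless := ⟨fun _ h => h.1 rfl⟩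

/-- The target function `τ_A`. -/
def tauA (A : Set V) (ℓ : ℕ) : V → V → ℕ := fun x y => if x ∈ A ∧ y ∈ A then ℓ else 0

/-- `r_τ(D)`. -/
noncomputable def rTau (s : V) (τ : V → V → ℕ) (D : Set V) : ℕ :=
  sSup {m | ∃ a ∈ D, ∃ b, b ∉ D ∧ b ≠ s ∧ τ a b = m}

/-- A dangerous set with respect to `A` and `ℓ`. -/
def DangerousA (G : Multigraph V E) (A : Set V) (ℓ : ℕ) (D : Set V) : Prop :=
  (D ∩ A).Nonempty ∧ (A \ D).Nonempty ∧ (G.cut D).ncard ≤ ℓ + 1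

/-- Independent set in a simple graph. -/
def IndepIn {α : Type} (L : SimpleGraph α) (s : Set α) : Prop :=
  s.Pairwise fun a b => ¬ L.Adj a b

/-- A one-way infinite path (ray). -/
def IsRay (G : Multigraph V E) (r : ℕ → E × Bool) : Prop :=
  (∀ n, G.dst (r n) = G.src (r (n + 1))) ∧ Function.Injective (fun n => G.src (r n))

def rayVerts (G : Multigraph V E) (r : ℕ → E × Bool) : Set V := {v | ∃ n, G.src (r n) = v}

def rayEdges (r : ℕ → E × Bool) : Set E := {e | ∃ n, (r n).1 = e}

def walkVerts (G : Multigraph V E) (l : List (E × Bool)) : Set V :=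
  {v | ∃ s ∈ l, G.src s = v ∨ G.dst s = v}

/-- Two rays are equivalent if there are infinitely many pairwise vertex-disjoint
paths between them. -/
def RayEquiv (G : Multigraph V E) (r1 r2 : ℕ → E × Bool) : Prop :=
  ∃ (P : ℕ → List (E × Bool)) (a b : ℕ → V),
    (∀ n, a n ∈ G.rayVerts r1 ∧ b n ∈ G.rayVerts r2 ∧ G.IsWalk (a n) (b n) (P n)) ∧
    ∀ m n, m ≠ n →
      Disjoint ({a m, b m} ∪ G.walkVerts (P m)) ({a n, b n} ∪ G.walkVerts (P n))

/-- `B` is boundary-linked: there are pairwise edge-disjoint equivalent rays in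
`G[B]` plus its boundary such that every boundary edge is the first edge of one of them. -/
def BoundaryLinked (G : Multigraph V E) (B : Set V) : Prop :=
  ∃ ρ : G.cut B → (ℕ → E × Bool),
    (∀ e, G.IsRay (ρ e) ∧ (ρ e 0).1 = e.1 ∧
      ∀ n, ((ρ e n).1 ∈ G.cut B ∨ (G.fst (ρ e n).1 ∈ B ∧ G.snd (ρ e n).1 ∈ B))) ∧
    (∀ e f : G.cut B, G.RayEquiv (ρ e) (ρ f)) ∧
    (∀ e f : G.cut B, e ≠ f → Disjoint (rayEdges (ρ e)) (rayEdges (ρ f)))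

def LocallyFinite (G : Multigraph V E) : Prop := ∀ v, {e | G.Inc e v}.Finite

/-- Reachability by a walk avoiding the edge set `F`. -/
def ReachAvoidE (G : Multigraph V E) (F : Set E) (x y : V) : Prop :=
  ∃ l, G.IsWalk x y l ∧ ∀ s ∈ l, s.1 ∉ F

/-- The edge set `F` separates `A'` from the end of the ray `r`. -/
def SeparatesEnd (G : Multigraph V E) (F : Set E) (A' : Set V) (r : ℕ → E × Bool) : Prop :=
  ∃ N, ∀ n, N ≤ n → ∀ a ∈ A', ¬ G.ReachAvoidE F a (G.src (r n))

/-- Reachability by a walk avoiding the vertex set `A`. -/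
def ReachAvoidV (G : Multigraph V E) (A : Set V) (x y : V) : Prop :=
  x ∉ A ∧ y ∉ A ∧ ∃ l, G.IsWalk x y l ∧ Disjoint (G.walkVerts l) A

/-- `B` is a connected component of `G - A`. -/
def IsComponentOutside (G : Multigraph V E) (A B : Set V) : Prop :=
  ∃ v, v ∉ A ∧ B = {w | G.ReachAvoidV A v w}

/-- A bond: a minimal edge cut. -/
def IsBond (G : Multigraph V E) (F : Set E) : Prop :=
  (∃ Y : Set V, Y.Nonempty ∧ Yᶜ.Nonempty ∧ F = G.cut Y) ∧
  ∀ F' : Set E, F' ⊂ F → ¬ ∃ Y : Set V, Y.Nonempty ∧ Yᶜ.Nonempty ∧ F' = G.cut Y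

/-- A spanning tree given by an edge set `T`: the subgraph `(V, T)` is connected
and contains no closed trail. -/
def IsSpanningTree (G : Multigraph V E) (T : Set E) : Prop :=
  (∀ x y : V, ∃ l, G.IsWalk x y l ∧ ∀ s ∈ l, s.1 ∈ T) ∧
  ∀ (v : V) (l : List (E × Bool)), l ≠ [] → G.IsTrail v v l → (∀ s ∈ l, s.1 ∈ T) → False

end Multigraph

end
end NW

open NW NW.Multigraph


namespace NWAux
set_option linter.unusedSectionVars false

open Finset

variable {V E : Type} [Fintype V] [Fintype E] [DecidableEq V] [DecidableEq E]

open Classical in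
/-- count of edges satisfying a predicate -/
noncomputable def cnt (p : E → Prop) : ℕ := (Finset.univ.filter p).card

open Classical in
theorem cnt_eq_sum (p : E → Prop) : cnt p = ∑ e : E, if p e then 1 else 0 := by
  classical
  rw [cnt, Finset.card_filter]

theorem cnt_mono {p q : E → Prop} (h : ∀ e, p e → q e) : cnt p ≤ cnt q := by
  classical
  rw [cnt_eq_sum, cnt_eq_sum]
  apply Finset.sum_le_sum
  intro e _
  by_cases hp : p e
  · simp [hp, h e hp]
  · simp [hp]

theorem cnt_congr {p q : E → Prop} (h : ∀ e, p e ↔ q e) : cnt p = cnt q :=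
  le_antisymm (cnt_mono fun e he => (h e).1 he) (cnt_mono fun e he => (h e).2 he)

theorem cnt_pos {p : E → Prop} (h : 0 < cnt p) : ∃ e, p e := by
  classical
  rw [cnt, Finset.card_pos] at h
  obtain ⟨e, he⟩ := h
  exact ⟨e, (Finset.mem_filter.1 he).2⟩

theorem cnt_le_one {p : E → Prop} (e₀ : E) (h : ∀ e, p e → e = e₀) : cnt p ≤ 1 := by
  classical
  rw [cnt]
  apply Finset.card_le_one.2
  intro a ha b hb
  rw [h a (Finset.mem_filter.1 ha).2, h b (Finset.mem_filter.1 hb).2]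

theorem cnt_unique {p : E → Prop} {e₀ e : E} (h1 : cnt p ≤ 1) (h0 : p e₀) (h : p e) : e = e₀ := by
  classical
  rw [cnt, Finset.card_le_one] at h1
  exact h1 e (by simp [h]) e₀ (by simp [h0])

theorem le_cnt {p : E → Prop} (s : Finset E) (h : ∀ e ∈ s, p e) : s.card ≤ cnt p := by
  classical
  rw [cnt]
  apply Finset.card_le_card
  intro e he
  simp [h e he]

theorem cnt_add_cnt {p q : E → Prop} :
    cnt p + cnt q = cnt (fun e => p e ∨ q e) + cnt (fun e => p e ∧ q e) := by
  classical
  simp only [cnt_eq_sum, ← Finset.sum_add_distrib]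
  apply Finset.sum_congr rfl
  intro e _
  by_cases hp : p e <;> by_cases hq : q e <;> simp [hp, hq]

end NWAux

namespace NWAux
set_option linter.unusedSectionVars false
open Finset
variable {V E : Type} [Fintype V] [Fintype E] [DecidableEq V] [DecidableEq E]
variable (G : Multigraph V E)

def crossP (X : Finset V) (e : E) : Prop :=
  (G.fst e ∈ X ∧ G.snd e ∉ X) ∨ (G.snd e ∈ X ∧ G.fst e ∉ X)

noncomputable def dC (X : Finset V) : ℕ := cnt (crossP G X)

def betP (X Y : Finset V) (e : E) : Prop :=
  (G.fst e ∈ X ∧ G.snd e ∈ Y) ∨ (G.snd e ∈ X ∧ G.fst e ∈ Y)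

noncomputable def betC (X Y : Finset V) : ℕ := cnt (betP G X Y)

def nl (e : E) : Prop := G.fst e ≠ G.snd e

def insideP (X : Finset V) (e : E) : Prop := nl G e ∧ G.fst e ∈ X ∧ G.snd e ∈ X

noncomputable def outC (o : E → Bool) (X : Finset V) : ℕ :=
  cnt (fun e => G.tailO o e ∈ X ∧ G.headO o e ∉ X)

/-- submodularity-type identity 1 -/
theorem I1 (X Y : Finset V) :
    dC G X + dC G Y
      = dC G (X ∩ Y) + (dC G (X ∪ Y) + (betC G (X \ Y) (Y \ X) + betC G (X \ Y) (Y \ X))) := by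
  classical
  simp only [dC, betC, cnt_eq_sum, ← Finset.sum_add_distrib]
  apply Finset.sum_congr rfl
  intro e _
  by_cases h1 : G.fst e ∈ X <;> by_cases h2 : G.fst e ∈ Y <;>
    by_cases h3 : G.snd e ∈ X <;> by_cases h4 : G.snd e ∈ Y <;>
    simp [crossP, betP, h1, h2, h3, h4]

/-- submodularity-type identity 2 -/
theorem I2 (X Y : Finset V) :
    dC G X + dC G Y
      = dC G (X \ Y) + (dC G (Y \ X) + (betC G (X ∩ Y) (X ∪ Y)ᶜ + betC G (X ∩ Y) (X ∪ Y)ᶜ)) := by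
  classical
  simp only [dC, betC, cnt_eq_sum, ← Finset.sum_add_distrib]
  apply Finset.sum_congr rfl
  intro e _
  by_cases h1 : G.fst e ∈ X <;> by_cases h2 : G.fst e ∈ Y <;>
    by_cases h3 : G.snd e ∈ X <;> by_cases h4 : G.snd e ∈ Y <;>
    simp [crossP, betP, h1, h2, h3, h4]

/-- degree expansion when adding `s` to a set not containing it -/
theorem I3 {s : V} {X : Finset V} (hs : s ∉ X) :
    dC G (insert s X) + (betC G {s} X + betC G {s} X) = dC G X + dC G {s} := by
  classical
  simp only [dC, betC, cnt_eq_sum, ← Finset.sum_add_distrib]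
  apply Finset.sum_congr rfl
  intro e _
  by_cases h1 : G.fst e = s <;> by_cases h2 : G.snd e = s <;>
    by_cases h3 : G.fst e ∈ X <;> by_cases h4 : G.snd e ∈ X <;>
    simp_all [crossP, betP] <;> omega

/-- additivity of edges to s -/
theorem I4 {s : V} {X Y : Finset V} (hx : s ∉ X) (hy : s ∉ Y) :
    betC G {s} X + betC G {s} Y = betC G {s} (X ∪ Y) + betC G {s} (X ∩ Y) := by
  classical
  simp only [betC, cnt_eq_sum, ← Finset.sum_add_distrib]
  apply Finset.sum_congr rfl
  intro e _
  by_cases h1 : G.fst e = s <;> by_cases h2 : G.snd e = s <;>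
    by_cases h3 : G.fst e ∈ X <;> by_cases h4 : G.snd e ∈ X <;>
    by_cases h5 : G.fst e ∈ Y <;> by_cases h6 : G.snd e ∈ Y <;>
    simp_all [betP] <;> omega

/-- handshake within a set -/
theorem I5 (X₀ : Finset V) :
    ∑ v ∈ X₀, dC G {v} = dC G X₀ + (cnt (insideP G X₀) + cnt (insideP G X₀)) := by
  classical
  simp only [dC, cnt_eq_sum, ← Finset.sum_add_distrib]
  rw [Finset.sum_comm]
  apply Finset.sum_congr rfl
  intro e _
  have key : ∀ v : V, (if crossP G {v} e then (1:ℕ) else 0)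
      = (if nl G e then ((if v = G.fst e then 1 else 0) + (if v = G.snd e then 1 else 0)) else 0) := by
    intro v
    by_cases hv1 : v = G.fst e <;> by_cases hv2 : v = G.snd e <;>
      simp_all [crossP, nl] <;> tauto
  simp only [key]
  by_cases hnl : nl G e
  · simp only [if_pos hnl, Finset.sum_add_distrib, Finset.sum_ite_eq' X₀]
    have hab : G.fst e ≠ G.snd e := hnl
    by_cases h3 : G.fst e ∈ X₀ <;> by_cases h4 : G.snd e ∈ X₀ <;>
      simp_all [crossP, insideP, nl] <;> omega
  · simp only [if_neg hnl, Finset.sum_const_zero]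
    have : G.fst e = G.snd e := not_not.1 hnl
    simp [crossP, insideP, nl, this, hnl]
    try tauto

/-- edges only inside A (or loops) -/
def Ins (A : Finset V) : Prop := ∀ e : E, (G.fst e ∈ A ∧ G.snd e ∈ A) ∨ G.fst e = G.snd e

theorem dC_compl_inside {A : Finset V} (hA : Ins G A) {s : V} {X : Finset V}
    (hXA : X ⊆ A) (hsA : s ∈ A) (hsX : s ∉ X) :
    dC G (insert s X) = dC G (A \ insert s X) := by
  classical
  apply cnt_congr
  intro e
  rcases hA e with ⟨h1, h2⟩ | hloop
  · simp only [crossP, Finset.mem_sdiff, Finset.mem_insert, h1, h2, true_and]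
    tauto
  · simp only [crossP, hloop, Finset.mem_sdiff]
    tauto

theorem dC_inter {A : Finset V} (hA : Ins G A) (X : Finset V) :
    dC G X = dC G (X ∩ A) := by
  classical
  apply cnt_congr
  intro e
  rcases hA e with ⟨h1, h2⟩ | hloop
  · simp [crossP, Finset.mem_inter, h1, h2]
  · simp [crossP, hloop]
    try tauto

end NWAux

namespace NWAux
set_option linter.unusedSectionVars false
set_option linter.unusedVariables false
open Finset

variable {V E : Type} [Fintype V] [Fintype E] [DecidableEq V] [DecidableEq E]
variable (G : Multigraph V E) (o : E → Bool)

open Classical in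
noncomputable def outF (F : Finset E) (x : V) : ℕ := (F.filter (fun e => G.tailO o e = x)).card
open Classical in
noncomputable def inF (F : Finset E) (x : V) : ℕ := (F.filter (fun e => G.headO o e = x)).card

theorem outF_insert {F : Finset E} {e : E} (he : e ∉ F) (y : V) :
    outF G o (insert e F) y = outF G o F y + (if G.tailO o e = y then 1 else 0) := by
  classical
  unfold outF
  rw [Finset.filter_insert]
  split_ifs with h
  · rw [Finset.card_insert_of_notMem (fun hc => he (Finset.mem_filter.1 hc).1)]
  · rfl

theorem inF_insert {F : Finset E} {e : E} (he : e ∉ F) (y : V) :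
    inF G o (insert e F) y = inF G o F y + (if G.headO o e = y then 1 else 0) := by
  classical
  unfold inF
  rw [Finset.filter_insert]
  split_ifs with h
  · rw [Finset.card_insert_of_notMem (fun hc => he (Finset.mem_filter.1 hc).1)]
  · rfl

theorem outF_erase {F : Finset E} {e : E} (he : e ∈ F) (y : V) :
    outF G o F y = outF G o (F.erase e) y + (if G.tailO o e = y then 1 else 0) := by
  classical
  unfold outF
  rw [Finset.filter_erase]
  split_ifs with h
  · rw [Finset.card_erase_add_one (Finset.mem_filter.2 ⟨he, h⟩)]
  · have hnm : e ∉ F.filter (fun e' => G.tailO o e' = y) := fun hc => h (Finset.mem_filter.1 hc).2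
    rw [Finset.erase_eq_of_notMem hnm]
    omega

theorem inF_erase {F : Finset E} {e : E} (he : e ∈ F) (y : V) :
    inF G o F y = inF G o (F.erase e) y + (if G.headO o e = y then 1 else 0) := by
  classical
  unfold inF
  rw [Finset.filter_erase]
  split_ifs with h
  · rw [Finset.card_erase_add_one (Finset.mem_filter.2 ⟨he, h⟩)]
  · have hnm : e ∉ F.filter (fun e' => G.headO o e' = y) := fun hc => h (Finset.mem_filter.1 hc).2
    rw [Finset.erase_eq_of_notMem hnm]
    omega

open Classical in
theorem sum_outF (F : Finset E) (R : Finset V) :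
    ∑ x ∈ R, outF G o F x = (F.filter (fun e => G.tailO o e ∈ R)).card := by
  classical
  unfold outF
  rw [Finset.card_filter]
  simp only [Finset.card_filter]
  rw [Finset.sum_comm]
  apply Finset.sum_congr rfl
  intro e _
  rw [Finset.sum_ite_eq R (G.tailO o e) (fun _ => 1)]

open Classical in
theorem sum_inF (F : Finset E) (R : Finset V) :
    ∑ x ∈ R, inF G o F x = (F.filter (fun e => G.headO o e ∈ R)).card := by
  classical
  unfold inF
  rw [Finset.card_filter]
  simp only [Finset.card_filter]
  rw [Finset.sum_comm]
  apply Finset.sum_congr rfl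
  intro e _
  rw [Finset.sum_ite_eq R (G.headO o e) (fun _ => 1)]

/-- directed walk using only edges of F -/
def DW (F : Finset E) : V → List E → V → Prop
  | x, [], y => x = y
  | x, e :: l, y => e ∈ F ∧ G.tailO o e = x ∧ DW F (G.headO o e) l y

@[simp] theorem DW_nil {F : Finset E} {x y : V} : DW G o F x [] y ↔ x = y := Iff.rfl

@[simp] theorem DW_cons {F : Finset E} {x y : V} {e : E} {l : List E} :
    DW G o F x (e :: l) y ↔ e ∈ F ∧ G.tailO o e = x ∧ DW G o F (G.headO o e) l y := Iff.rfl

theorem DW_mono {F F' : Finset E} (hFF : F ⊆ F') :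
    ∀ l x y, DW G o F x l y → DW G o F' x l y := by
  intro l
  induction l with
  | nil => intro x y h; exact h
  | cons e l ih =>
    intro x y h
    rw [DW_cons] at h ⊢
    exact ⟨hFF h.1, h.2.1, ih _ _ h.2.2⟩

theorem DW_mem {F : Finset E} : ∀ l x y, DW G o F x l y → ∀ e ∈ l, e ∈ F := by
  intro l
  induction l with
  | nil => intro x y h e he; simp at he
  | cons f l ih =>
    intro x y h e he
    rw [DW_cons] at h
    rcases List.mem_cons.1 he with rfl | he'
    · exact h.1
    · exact ih _ _ h.2.2 e he'

/-- residual step -/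
def RStep (F : Finset E) (x : V) (s : E × Bool) : Prop :=
  if s.2 then (s.1 ∉ F ∧ G.tailO o s.1 = x) else (s.1 ∈ F ∧ G.headO o s.1 = x)

def RDst (s : E × Bool) : V := if s.2 then G.headO o s.1 else G.tailO o s.1

/-- residual walk -/
def RW (F : Finset E) : V → List (E × Bool) → V → Prop
  | x, [], y => x = y
  | x, s :: l, y => RStep G o F x s ∧ RW F (RDst G o s) l y

@[simp] theorem RW_nil {F : Finset E} {x y : V} : RW G o F x [] y ↔ x = y := Iff.rfl

@[simp] theorem RW_cons {F : Finset E} {x y : V} {s : E × Bool} {l : List (E × Bool)} :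
    RW G o F x (s :: l) y ↔ RStep G o F x s ∧ RW G o F (RDst G o s) l y := Iff.rfl

theorem RW_append {F : Finset E} :
    ∀ l₁ l₂ x y, RW G o F x (l₁ ++ l₂) y ↔ ∃ z, RW G o F x l₁ z ∧ RW G o F z l₂ y := by
  intro l₁
  induction l₁ with
  | nil =>
    intro l₂ x y
    constructor
    · intro h; exact ⟨x, rfl, h⟩
    · rintro ⟨z, hz, h⟩; cases hz; exact h
  | cons s l ih =>
    intro l₂ x y
    constructor
    · intro hh
      rw [List.cons_append, RW_cons] at hh
      obtain ⟨hs, h⟩ := hh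
      obtain ⟨z, h1, h2⟩ := (ih _ _ _).1 h
      exact ⟨z, (RW_cons G o).2 ⟨hs, h1⟩, h2⟩
    · rintro ⟨z, hh, h2⟩
      rw [RW_cons] at hh
      obtain ⟨hs, h1⟩ := hh
      rw [List.cons_append, RW_cons]
      exact ⟨hs, (ih _ _ _).2 ⟨z, h1, h2⟩⟩

theorem RStep_src_unique {F : Finset E} {x z : V} {s : E × Bool}
    (h1 : RStep G o F x s) (h2 : RStep G o F z s) : x = z := by
  unfold RStep at h1 h2
  split_ifs at h1 h2
  · rw [← h1.2, ← h2.2]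
  · rw [← h1.2, ← h2.2]

/-- from any residual walk extract one whose edges are Nodup -/
theorem RW_dedup {F : Finset E} :
    ∀ (n : ℕ) (l : List (E × Bool)) (x y : V), l.length ≤ n → RW G o F x l y →
      ∃ l', RW G o F x l' y ∧ (l'.map Prod.fst).Nodup ∧ ∀ t ∈ l', t ∈ l := by
  intro n
  induction n with
  | zero =>
    intro l x y hl h
    rw [Nat.le_zero, List.length_eq_zero_iff] at hl
    subst hl
    exact ⟨[], h, List.nodup_nil, by simp⟩
  | succ n ih =>
    intro l x y hl h
    by_cases hnd : (l.map Prod.fst).Nodup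
    · exact ⟨l, h, hnd, fun t ht => ht⟩
    · -- find a duplicate
      cases l with
      | nil => simp at hnd
      | cons s l0 =>
        rw [RW_cons] at h
        obtain ⟨hs, h0⟩ := h
        by_cases hmem : s.1 ∈ l0.map Prod.fst
        · -- s.1 occurs later; find the occurrence
          obtain ⟨t, ht, hts⟩ := List.mem_map.1 hmem
          obtain ⟨l₁, l₂, rfl⟩ := List.append_of_mem ht
          obtain ⟨z, hz1, hz2⟩ := (RW_append G o _ _ _ _).1 h0
          obtain ⟨hstep, hrest⟩ := hz2
          -- t and s: same edge
          have hb : t.2 = s.2 := by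
            by_contra hab
            unfold RStep at hs hstep
            rw [hts] at hstep
            rcases Bool.eq_false_or_eq_true s.2 with h2 | h2 <;>
              rcases Bool.eq_false_or_eq_true t.2 with h1 | h1 <;>
              rw [h2] at hs <;> rw [h1] at hstep <;>
              first
                | exact hab (h1.trans h2.symm)
                | (simp only [if_true, if_false, Bool.false_eq_true, ite_true, ite_false] at hs hstep; tauto)
          have hts' : t = s := Prod.ext hts hb
          subst hts'
          have hxz : z = x := RStep_src_unique G o hstep hs
          have hwalk : RW G o F x (t :: l₂) y := by
            rw [← hxz]
            exact (RW_cons G o).2 ⟨hstep, hrest⟩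
          obtain ⟨l', hw', hnd', hsub'⟩ := ih (t :: l₂) x y (by
            simp only [List.length_cons, List.length_append] at hl ⊢
            omega) hwalk
          refine ⟨l', hw', hnd', fun r hr => ?_⟩
          rcases List.mem_cons.1 (hsub' r hr) with rfl | hr2
          · exact List.mem_cons_self
          · exact List.mem_cons_of_mem _ (List.mem_append_right _ (List.mem_cons_of_mem _ hr2))
        · -- s.1 not in rest: dedup the rest
          obtain ⟨l', hw', hnd', hsub'⟩ := ih l0 _ y (by simp only [List.length_cons] at hl; omega) h0
          refine ⟨s :: l', ⟨hs, hw'⟩, ?_, ?_⟩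
          · rw [List.map_cons, List.nodup_cons]
            refine ⟨fun hc => hmem ?_, hnd'⟩
            obtain ⟨r, hr, hr1⟩ := List.mem_map.1 hc
            exact List.mem_map.2 ⟨r, hsub' r hr, hr1⟩
          · intro r hr
            rcases List.mem_cons.1 hr with rfl | hr2
            · exact List.mem_cons_self
            · exact List.mem_cons_of_mem _ (hsub' r hr2)

theorem RW_congr {F F' : Finset E} :
    ∀ l x y, RW G o F x l y → (∀ t ∈ l, (t.1 ∈ F' ↔ t.1 ∈ F)) → RW G o F' x l y := by
  intro l
  induction l with
  | nil => intro x y h _; exact h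
  | cons s l ih =>
    intro x y h hiff
    rw [RW_cons] at h ⊢
    refine ⟨?_, ih _ _ h.2 fun t ht => hiff t (List.mem_cons_of_mem _ ht)⟩
    have hs := h.1
    have hi := hiff s List.mem_cons_self
    unfold RStep at hs ⊢
    split_ifs at hs ⊢ <;> tauto


/-- reachability in the residual graph -/
def Rch (F : Finset E) (x y : V) : Prop := ∃ l, RW G o F x l y

theorem Rch_refl (F : Finset E) (x : V) : Rch G o F x x := ⟨[], rfl⟩

theorem Rch_step {F : Finset E} {x y : V} (h : Rch G o F x y) {s : E × Bool}
    (hs : RStep G o F y s) : Rch G o F x (RDst G o s) := by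
  obtain ⟨l, hl⟩ := h
  exact ⟨l ++ [s], (RW_append G o _ _ _ _).2 ⟨y, hl, (RW_cons G o).2 ⟨hs, (RW_nil G o).2 rfl⟩⟩⟩

/-- augmenting along a residual walk with distinct edges -/
theorem AUG {w : V} :
    ∀ (l : List (E × Bool)) (F : Finset E) (x : V), RW G o F x l w → (l.map Prod.fst).Nodup →
      ∃ F' : Finset E, ∀ y, y ≠ w →
        outF G o F' y + inF G o F y = inF G o F' y + outF G o F y + (if y = x then 1 else 0) := by
  intro l
  induction l with
  | nil =>
    intro F x h _
    have hx : x = w := (RW_nil G o).1 h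
    subst hx
    exact ⟨F, fun y hy => by rw [if_neg hy]; omega⟩
  | cons s l ih =>
    intro F x h hnd
    rw [RW_cons] at h
    obtain ⟨hs, hrest⟩ := h
    rw [List.map_cons, List.nodup_cons] at hnd
    have hne : ∀ t ∈ l, t.1 ≠ s.1 := fun t ht hc => hnd.1 (hc ▸ List.mem_map.2 ⟨t, ht, rfl⟩)
    have ite_comm_eq : ∀ (a b : V), (if a = b then (1:ℕ) else 0) = (if b = a then 1 else 0) := by
      intro a b
      by_cases h : a = b
      · rw [if_pos h, if_pos h.symm]
      · rw [if_neg h, if_neg (fun hc => h hc.symm)]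
    rcases Bool.eq_false_or_eq_true s.2 with hb | hb
    · -- forward step: s.1 ∉ F, tailO = x
      have hs' : s.1 ∉ F ∧ G.tailO o s.1 = x := by unfold RStep at hs; rw [hb] at hs; simpa using hs
      set e := s.1 with he
      set F₁ := insert e F with hF₁
      have hrd : RDst G o s = G.headO o e := by unfold RDst; rw [hb]; simp [he]
      have hrw1 : RW G o F₁ (G.headO o e) l w := by
        rw [← hrd]
        apply RW_congr G o l _ _ hrest
        intro t ht
        rw [hF₁, Finset.mem_insert]
        have := hne t ht
        tauto
      obtain ⟨F', hF'⟩ := ih F₁ _ hrw1 hnd.2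
      refine ⟨F', fun y hy => ?_⟩
      have h1 := hF' y hy
      have h2 := outF_insert G o hs'.1 y
      have h3 := inF_insert G o hs'.1 y
      rw [← hF₁] at h2 h3
      rw [hs'.2] at h2
      rw [ite_comm_eq] at h2 h3
      set a := (if y = x then (1:ℕ) else 0) with ha
      set b := (if y = G.headO o e then (1:ℕ) else 0) with hbb
      omega
    · -- backward step: s.1 ∈ F, headO = x, go to tailO
      have hs' : s.1 ∈ F ∧ G.headO o s.1 = x := by unfold RStep at hs; rw [hb] at hs; simpa using hs
      set e := s.1 with he
      set F₁ := F.erase e with hF₁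
      have hrd : RDst G o s = G.tailO o e := by unfold RDst; rw [hb]; simp [he]
      have hrw1 : RW G o F₁ (G.tailO o e) l w := by
        rw [← hrd]
        apply RW_congr G o l _ _ hrest
        intro t ht
        rw [hF₁, Finset.mem_erase]
        have := hne t ht
        tauto
      obtain ⟨F', hF'⟩ := ih F₁ _ hrw1 hnd.2
      refine ⟨F', fun y hy => ?_⟩
      have h1 := hF' y hy
      have h2 := outF_erase G o hs'.1 y
      have h3 := inF_erase G o hs'.1 y
      rw [← hF₁] at h2 h3
      rw [hs'.2] at h3
      rw [ite_comm_eq] at h2 h3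
      set a := (if y = x then (1:ℕ) else 0) with ha
      set b := (if y = G.tailO o e then (1:ℕ) else 0) with hbb
      omega

end NWAux

namespace NWAux
set_option linter.unusedSectionVars false
set_option linter.unusedVariables false
open Finset

variable {V E : Type} [Fintype V] [Fintype E] [DecidableEq V] [DecidableEq E]
variable (G : Multigraph V E) (o : E → Bool)

open Classical in
theorem cnt_eq_card {p : E → Prop} {s : Finset E} (h : ∀ e, p e ↔ e ∈ s) : cnt p = s.card := by
  classical
  rw [cnt]
  congr 1
  ext e
  simp [Finset.mem_filter, h e]

theorem ite_one_comm (a b : V) : (if a = b then (1:ℕ) else 0) = (if b = a then 1 else 0) := by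
  by_cases h : a = b
  · rw [if_pos h, if_pos h.symm]
  · rw [if_neg h, if_neg (fun hc => h hc.symm)]

open Classical in
theorem flow_exists {v w : V} (hvw : v ≠ w) (k : ℕ)
    (HC : ∀ X : Finset V, v ∈ X → w ∉ X → k ≤ outC G o X) :
    ∀ j, j ≤ k → ∃ F : Finset E, ∀ y, y ≠ w →
      outF G o F y = inF G o F y + (if y = v then j else 0) := by
  intro j
  induction j with
  | zero =>
    intro _
    refine ⟨∅, fun y hy => ?_⟩
    simp [outF, inF]
  | succ j ih =>
    intro hjk
    obtain ⟨F, hF⟩ := ih (by omega)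
    by_cases hr : Rch G o F v w
    · obtain ⟨l, hl⟩ := hr
      obtain ⟨l', hl', hnd', _⟩ := RW_dedup G o l.length l v w le_rfl hl
      obtain ⟨F', hF'⟩ := AUG G o l' F v hl' hnd'
      refine ⟨F', fun y hy => ?_⟩
      have h1 := hF' y hy
      have h2 := hF y hy
      by_cases hyv : y = v
      · rw [if_pos hyv] at h1
        rw [if_pos hyv] at h2 ⊢
        omega
      · rw [if_neg hyv] at h1
        rw [if_neg hyv] at h2 ⊢
        omega
    · exfalso
      set R : Finset V := Finset.univ.filter (fun x => Rch G o F v x) with hR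
      have hvR : v ∈ R := by rw [hR, Finset.mem_filter]; exact ⟨Finset.mem_univ _, Rch_refl G o F v⟩
      have hwR : w ∉ R := by rw [hR, Finset.mem_filter]; intro hc; exact hr hc.2
      have claim1 : ∀ e, G.tailO o e ∈ R → G.headO o e ∉ R → e ∈ F := by
        intro e ht hh
        by_contra heF
        apply hh
        rw [hR, Finset.mem_filter] at ht ⊢
        refine ⟨Finset.mem_univ _, ?_⟩
        have hstep : RStep G o F (G.tailO o e) (e, true) := by
          unfold RStep
          rw [if_pos rfl]
          exact ⟨heF, rfl⟩
        have := Rch_step G o ht.2 hstep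
        simpa [RDst] using this
      have claim2 : ∀ e ∈ F, G.headO o e ∈ R → G.tailO o e ∈ R := by
        intro e heF hh
        rw [hR, Finset.mem_filter] at hh ⊢
        refine ⟨Finset.mem_univ _, ?_⟩
        have hstep : RStep G o F (G.headO o e) (e, false) := by
          unfold RStep
          rw [if_neg (by simp)]
          exact ⟨heF, rfl⟩
        have := Rch_step G o hh.2 hstep
        simpa [RDst] using this
      have hsum : ∑ x ∈ R, outF G o F x = (∑ x ∈ R, inF G o F x) + j := by
        have hc : ∀ x ∈ R, outF G o F x = inF G o F x + (if x = v then j else 0) := by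
          intro x hx
          apply hF
          intro hxw; subst hxw; exact hwR hx
        rw [Finset.sum_congr rfl hc, Finset.sum_add_distrib]
        congr 1
        rw [Finset.sum_ite_eq' R v (fun _ => j), if_pos hvR]
      rw [sum_outF, sum_inF] at hsum
      have hsplit1 : (F.filter (fun e => G.tailO o e ∈ R)).card
          = ((F.filter (fun e => G.tailO o e ∈ R)).filter (fun e => G.headO o e ∈ R)).card
            + ((F.filter (fun e => G.tailO o e ∈ R)).filter (fun e => ¬ G.headO o e ∈ R)).card := by
        rw [Finset.card_filter_add_card_filter_not]
      have hsplit2 : (F.filter (fun e => G.headO o e ∈ R)).card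
          = ((F.filter (fun e => G.tailO o e ∈ R)).filter (fun e => G.headO o e ∈ R)).card := by
        have hfe : F.filter (fun e => G.headO o e ∈ R)
            = (F.filter (fun e => G.tailO o e ∈ R)).filter (fun e => G.headO o e ∈ R) := by
          ext e
          simp only [Finset.mem_filter]
          constructor
          · rintro ⟨he, hh⟩; exact ⟨⟨he, claim2 e he hh⟩, hh⟩
          · rintro ⟨⟨he, _⟩, hh⟩; exact ⟨he, hh⟩
        rw [hfe]
      have hcut : k ≤ ((F.filter (fun e => G.tailO o e ∈ R)).filter (fun e => ¬ G.headO o e ∈ R)).card := by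
        have hk := HC R hvR hwR
        unfold outC at hk
        have hfe : cnt (fun e => G.tailO o e ∈ R ∧ G.headO o e ∉ R)
            = ((F.filter (fun e => G.tailO o e ∈ R)).filter (fun e => ¬ G.headO o e ∈ R)).card := by
          apply cnt_eq_card
          intro e
          simp only [Finset.mem_filter]
          constructor
          · rintro ⟨ht, hh⟩; exact ⟨⟨claim1 e ht hh, ht⟩, hh⟩
          · rintro ⟨⟨_, ht⟩, hh⟩; exact ⟨ht, hh⟩
        rw [hfe] at hk
        exact hk
      omega

open Classical in
theorem extract (w : V) : ∀ (N : ℕ) (F : Finset E), F.card ≤ N → ∀ (u : V) (c d : V → ℕ),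
    u ≠ w → (∀ y, y ≠ w → outF G o F y + d y = inF G o F y + c y) →
    (∀ y, y ≠ w → d y ≤ c y) → d u + 1 ≤ c u →
    ∃ l : List E, DW G o F u l w ∧ l.Nodup ∧
      ∀ y, y ≠ w → outF G o (F \ l.toFinset) y + inF G o F y + (if y = u then 1 else 0)
          = outF G o F y + inF G o (F \ l.toFinset) y := by
  intro N
  induction N with
  | zero =>
    intro F hcard u c d huw hbal hdc hcu
    exfalso
    have h1 := hbal u huw
    have hF0 : F = ∅ := Finset.card_eq_zero.1 (by omega)
    subst hF0
    simp [outF, inF] at h1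
    omega
  | succ N ih =>
    intro F hcard u c d huw hbal hdc hcu
    have hout : 1 ≤ outF G o F u := by
      have h1 := hbal u huw
      omega
    have hne : (F.filter (fun e => G.tailO o e = u)).Nonempty := by
      rw [← Finset.card_pos]
      unfold outF at hout
      omega
    obtain ⟨e, he⟩ := hne
    rw [Finset.mem_filter] at he
    set u' := G.headO o e with hu'
    set F₁ := F.erase e with hF₁
    have h2 : ∀ y, outF G o F y = outF G o F₁ y + (if y = u then 1 else 0) := by
      intro y
      rw [outF_erase G o he.1 y, he.2, ite_one_comm]
    have h3 : ∀ y, inF G o F y = inF G o F₁ y + (if y = u' then 1 else 0) := by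
      intro y
      rw [inF_erase G o he.1 y, ite_one_comm]
    by_cases hu'w : u' = w
    · refine ⟨[e], ⟨he.1, he.2, hu'w⟩, List.nodup_singleton e, fun y hy => ?_⟩
      have heq : F \ [e].toFinset = F₁ := by
        rw [hF₁]; ext x; simp [Finset.mem_sdiff, Finset.mem_erase, and_comm]
      rw [heq]
      have h2y := h2 y
      have h3y := h3 y
      have h3y2 : inF G o F y = inF G o F₁ y := by
        rw [h3y, if_neg (fun hc : y = u' => hy (hc.trans hu'w))]
        exact Nat.add_zero _
      set a := (if y = u then (1:ℕ) else 0) with ha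
      omega
    · have hbal1 : ∀ y, y ≠ w → outF G o F₁ y + (d y + (if y = u then 1 else 0))
          = inF G o F₁ y + (c y + (if y = u' then 1 else 0)) := by
        intro y hy
        have hb := hbal y hy
        have h2y := h2 y
        have h3y := h3 y
        set a := (if y = u then (1:ℕ) else 0) with ha
        set b := (if y = u' then (1:ℕ) else 0) with hb2
        omega
      have hdc1 : ∀ y, y ≠ w → d y + (if y = u then 1 else 0) ≤ c y + (if y = u' then 1 else 0) := by
        intro y hy
        have := hdc y hy
        by_cases hyu : y = u
        · subst hyu
          rw [if_pos rfl]
          by_cases hyu2 : y = u'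
          · rw [if_pos hyu2]; omega
          · rw [if_neg hyu2]; omega
        · rw [if_neg hyu]
          by_cases hyu2 : y = u'
          · rw [if_pos hyu2]; omega
          · rw [if_neg hyu2]; omega
      have hcu1 : (d u' + (if u' = u then 1 else 0)) + 1 ≤ c u' + (if u' = u' then 1 else 0) := by
        rw [if_pos rfl]
        by_cases h : u' = u
        · rw [if_pos h, h]; omega
        · rw [if_neg h]
          have := hdc u' hu'w
          omega
      have hcard1 : F₁.card ≤ N := by
        rw [hF₁, Finset.card_erase_of_mem he.1]
        omega
      obtain ⟨l₁, hDW₁, hnd₁, heq₁⟩ := ih F₁ hcard1 u' _ _ hu'w hbal1 hdc1 hcu1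
      have hmem₁ := DW_mem G o l₁ u' w hDW₁
      refine ⟨e :: l₁, ⟨he.1, he.2, DW_mono G o (Finset.erase_subset e F) l₁ u' w hDW₁⟩, ?_, ?_⟩
      · rw [List.nodup_cons]
        refine ⟨fun hc => ?_, hnd₁⟩
        have := hmem₁ e hc
        rw [hF₁, Finset.mem_erase] at this
        exact this.1 rfl
      · intro y hy
        have hsd : F \ (e :: l₁).toFinset = F₁ \ l₁.toFinset := by
          rw [hF₁]; ext x
          simp only [Finset.mem_sdiff, List.toFinset_cons, Finset.mem_insert, Finset.mem_erase,
            List.mem_toFinset]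
          tauto
        rw [hsd]
        have hq₁ := heq₁ y hy
        have h2y := h2 y
        have h3y := h3 y
        set a := (if y = u then (1:ℕ) else 0) with ha
        set b := (if y = u' then (1:ℕ) else 0) with hb2
        omega

open Classical in
theorem decomp {v w : V} (hvw : v ≠ w) : ∀ (j : ℕ) (F : Finset E),
    (∀ y, y ≠ w → outF G o F y = inF G o F y + (if y = v then j else 0)) →
    ∃ g : Fin j → List E, (∀ i, DW G o F v (g i) w ∧ (g i).Nodup) ∧
      ∀ i i', i ≠ i' → (g i).Disjoint (g i') := by
  intro j
  induction j with
  | zero =>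
    intro F hF
    exact ⟨fun i => i.elim0, fun i => i.elim0, fun i => i.elim0⟩
  | succ j ih =>
    intro F hF
    obtain ⟨l, hDW, hnd, heq⟩ := extract G o w F.card F le_rfl v
      (fun y => if y = v then j + 1 else 0) (fun _ => 0) hvw
      (fun y hy => by
        show outF G o F y + 0 = inF G o F y + (if y = v then j + 1 else 0)
        rw [hF y hy]
        exact Nat.add_zero _)
      (fun y hy => by
        show (0:ℕ) ≤ (if y = v then j + 1 else 0)
        omega)
      (by
        show 0 + 1 ≤ (if v = v then j + 1 else 0)
        rw [if_pos rfl]; omega)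
    set F' := F \ l.toFinset with hF'
    have hbal2 : ∀ y, y ≠ w → outF G o F' y = inF G o F' y + (if y = v then j else 0) := by
      intro y hy
      have h1 := heq y hy
      have h2 := hF y hy
      by_cases hyv : y = v
      · subst hyv
        rw [if_pos rfl] at h1 h2 ⊢
        omega
      · rw [if_neg hyv] at h1 h2 ⊢
        omega
    obtain ⟨g', hg', hdisj'⟩ := ih F' hbal2
    have hmem := DW_mem G o l v w hDW
    have hmem2 : ∀ i e, e ∈ g' i → e ∉ l := by
      intro i e heg hel
      have := DW_mem G o (g' i) v w (hg' i).1 e heg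
      rw [hF', Finset.mem_sdiff] at this
      exact this.2 (List.mem_toFinset.2 hel)
    refine ⟨fun i => Fin.cases l (fun i2 => g' i2) i, fun i => ?_, fun i i2 hne => ?_⟩
    · induction i using Fin.cases with
      | zero => exact ⟨hDW, hnd⟩
      | succ i2 =>
        simp only [Fin.cases_succ]
        exact ⟨DW_mono G o Finset.sdiff_subset _ _ _ (hg' i2).1, (hg' i2).2⟩
    · induction i using Fin.cases with
      | zero =>
        induction i2 using Fin.cases with
        | zero => exact absurd rfl hne
        | succ i3 =>
          simp only [Fin.cases_zero, Fin.cases_succ]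
          intro e hel heg
          exact hmem2 i3 e heg hel
      | succ i3 =>
        induction i2 using Fin.cases with
        | zero =>
          simp only [Fin.cases_zero, Fin.cases_succ]
          intro e heg hel
          exact hmem2 i3 e heg hel
        | succ i4 =>
          simp only [Fin.cases_succ]
          apply hdisj'
          intro hc
          exact hne (by rw [hc])

theorem DW_isdiwalk {F : Finset E} : ∀ (l : List E) (x y : V), DW G o F x l y →
    G.IsDiWalk o x y l := by
  intro l
  induction l with
  | nil =>
    intro x y h
    exact ⟨List.isChain_nil, Or.inl ⟨rfl, h⟩⟩
  | cons e l ih =>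
    intro x y h
    rw [DW_cons] at h
    obtain ⟨heF, hte, hrest⟩ := h
    obtain ⟨hch, hends⟩ := ih _ _ hrest
    constructor
    · show List.IsChain _ (e :: l); rw [List.isChain_cons]
      refine ⟨?_, hch⟩
      intro f hf
      rcases hends with ⟨hnil, _⟩ | ⟨a, b, ha, _, hsa, _⟩
      · subst hnil; simp at hf
      · rw [ha] at hf
        simp at hf
        subst hf
        exact hsa.symm
    · right
      rcases hends with ⟨hnil, hxy⟩ | ⟨a, b, ha, hb, hsa, hdb⟩
      · subst hnil
        exact ⟨e, e, rfl, rfl, hte, hxy ▸ rfl⟩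
      · refine ⟨e, b, rfl, ?_, hte, hdb⟩
        cases l with
        | nil => simp at ha
        | cons a2 l2 => rw [List.getLast?_cons_cons]; exact hb

/-- Directed edge-Menger: cut condition implies k arc-disjoint trails. -/
theorem menger {v w : V} (hvw : v ≠ w) (k : ℕ)
    (HC : ∀ X : Finset V, v ∈ X → w ∉ X → k ≤ outC G o X) :
    G.DiConnAtLeast o v w k := by
  obtain ⟨F, hF⟩ := flow_exists G o hvw k HC k le_rfl
  obtain ⟨g, hg, hdisj⟩ := decomp G o hvw k F hF
  exact ⟨g, fun i => ⟨DW_isdiwalk G o (g i) v w (hg i).1, (hg i).2⟩, hdisj⟩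

end NWAux

namespace NWAux
set_option linter.unusedSectionVars false
set_option linter.unusedVariables false
open Finset

variable {V E : Type} [Fintype V] [Fintype E] [DecidableEq V] [DecidableEq E]
variable (G : Multigraph V E)

/-- nonloop edge incident to s -/
def nlInc (s : V) (e : E) : Prop := nl G e ∧ (G.fst e = s ∨ G.snd e = s)

theorem ds_eq_cnt_nlInc (s : V) : dC G {s} = cnt (nlInc G s) := by
  apply cnt_congr
  intro e
  unfold crossP nlInc nl
  simp only [Finset.mem_singleton]
  constructor
  · rintro (⟨h1, h2⟩ | ⟨h1, h2⟩)
    · exact ⟨fun hc => h2 (by rw [← hc, h1]), Or.inl h1⟩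
    · exact ⟨fun hc => h2 (by rw [hc, h1]), Or.inr h1⟩
  · rintro ⟨h1, h2 | h2⟩
    · exact Or.inl ⟨h2, fun hc => h1 (h2.trans hc.symm)⟩
    · exact Or.inr ⟨h2, fun hc => h1 (hc.trans h2.symm)⟩

theorem other_ne {s : V} {e : E} (he : nlInc G s e) : G.other s e ≠ s := by
  unfold Multigraph.other
  rcases he with ⟨h1, h2 | h2⟩
  · rw [if_pos h2]
    intro hc
    exact h1 (h2.trans hc.symm)
  · by_cases h3 : G.fst e = s
    · rw [if_pos h3]
      intro hc
      exact h1 (h3.trans hc.symm)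
    · rw [if_neg h3]
      exact h3

theorem other_mem {A : Finset V} (hA : Ins G A) {s : V} {e : E} (he : nlInc G s e) :
    G.other s e ∈ A := by
  rcases hA e with ⟨h1, h2⟩ | hloop
  · unfold Multigraph.other
    split_ifs <;> assumption
  · exact absurd hloop he.1

theorem other_other {s : V} {e : E} (he : nlInc G s e) :
    G.other (G.other s e) e = s := by
  obtain ⟨h1, h2⟩ := he
  rcases h2 with h2 | h2
  · have ho : G.other s e = G.snd e := by unfold Multigraph.other; rw [if_pos h2]
    rw [ho]
    unfold Multigraph.other
    rw [if_neg h1]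
    exact h2
  · by_cases h3 : G.fst e = s
    · have ho : G.other s e = G.snd e := by unfold Multigraph.other; rw [if_pos h3]
      rw [ho]
      unfold Multigraph.other
      rw [if_neg h1]
      exact h3
    · have ho : G.other s e = G.fst e := by unfold Multigraph.other; rw [if_neg h3]
      rw [ho]
      unfold Multigraph.other
      rw [if_pos rfl]
      exact h2

theorem cross_single {s : V} {e : E} (he : nlInc G s e) {X : Finset V} (hsX : s ∉ X) :
    crossP G X e ↔ G.other s e ∈ X := by
  obtain ⟨h1, h2⟩ := he
  rcases h2 with h2 | h2
  · have ho : G.other s e = G.snd e := by unfold Multigraph.other; rw [if_pos h2]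
    rw [ho]
    unfold crossP
    constructor
    · rintro (⟨ha, hb⟩ | ⟨ha, hb⟩)
      · rw [h2] at ha; exact absurd ha hsX
      · exact ha
    · intro h
      refine Or.inr ⟨h, ?_⟩
      rw [h2]
      exact hsX
  · have h3 : G.fst e ≠ s := fun hc => h1 (hc.trans h2.symm)
    have ho : G.other s e = G.fst e := by unfold Multigraph.other; rw [if_neg h3]
    rw [ho]
    unfold crossP
    constructor
    · rintro (⟨ha, hb⟩ | ⟨ha, hb⟩)
      · exact ha
      · rw [h2] at ha; exact absurd ha hsX
    · intro h
      refine Or.inl ⟨h, ?_⟩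
      rw [h2]
      exact hsX

theorem bmem {s : V} {X : Finset V} (hsX : s ∉ X) (e : E) :
    betP G {s} X e ↔ nlInc G s e ∧ G.other s e ∈ X := by
  unfold betP nlInc nl Multigraph.other
  simp only [Finset.mem_singleton]
  constructor
  · rintro (⟨h1, h2⟩ | ⟨h1, h2⟩)
    · have hne : G.fst e ≠ G.snd e := fun hc => hsX (by rw [← h1, hc]; exact h2)
      exact ⟨⟨hne, Or.inl h1⟩, by rw [if_pos h1]; exact h2⟩
    · have hne : G.fst e ≠ G.snd e := fun hc => hsX (by rw [← h1, ← hc]; exact h2)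
      have h3 : G.fst e ≠ s := fun hc => hne (hc.trans h1.symm)
      exact ⟨⟨hne, Or.inr h1⟩, by rw [if_neg h3]; exact h2⟩
  · rintro ⟨⟨h1, h2 | h2⟩, h3⟩
    · rw [if_pos h2] at h3
      exact Or.inl ⟨h2, h3⟩
    · have h4 : G.fst e ≠ s := fun hc => h1 (hc.trans h2.symm)
      rw [if_neg h4] at h3
      exact Or.inr ⟨h2, h3⟩

theorem bC_ge_one {s : V} {X : Finset V} (hsX : s ∉ X) {e : E} (he : nlInc G s e)
    (hu : G.other s e ∈ X) : 1 ≤ betC G {s} X := by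
  unfold betC
  have h1 : ({e} : Finset E).card ≤ cnt (betP G {s} X) := by
    apply le_cnt
    intro g hg
    rw [Finset.mem_singleton] at hg
    subst hg
    exact (bmem G hsX g).2 ⟨he, hu⟩
  simpa using h1

/-- the split graph: e becomes (other e, other f), f becomes a loop at s -/
noncomputable def splitG (s : V) (e f : E) : Multigraph V E where
  fst := fun g => if g = e then G.other s e else if g = f then s else G.fst g
  snd := fun g => if g = f then s else if g = e then G.other s f else G.snd g

theorem splitG_fst_e {s : V} {e f : E} (hef : e ≠ f) : (splitG G s e f).fst e = G.other s e := by
  unfold splitG; simp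

theorem splitG_snd_e {s : V} {e f : E} (hef : e ≠ f) : (splitG G s e f).snd e = G.other s f := by
  unfold splitG; simp [hef]

theorem splitG_fst_f {s : V} {e f : E} (hef : e ≠ f) : (splitG G s e f).fst f = s := by
  unfold splitG; simp [hef.symm]

theorem splitG_snd_f {s : V} {e f : E} (hef : e ≠ f) : (splitG G s e f).snd f = s := by
  unfold splitG; simp

theorem splitG_fst_other {s : V} {e f g : E} (hge : g ≠ e) (hgf : g ≠ f) :
    (splitG G s e f).fst g = G.fst g := by
  unfold splitG; simp [hge, hgf]

theorem splitG_snd_other {s : V} {e f g : E} (hge : g ≠ e) (hgf : g ≠ f) :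
    (splitG G s e f).snd g = G.snd g := by
  unfold splitG; simp [hge, hgf]

end NWAux

namespace NWAux
set_option linter.unusedSectionVars false
set_option linter.unusedVariables false
open Finset

variable {V E : Type} [Fintype V] [Fintype E] [DecidableEq V] [DecidableEq E]
variable (G : Multigraph V E)

theorem sum_split_two {e f : E} (hef : e ≠ f) (h : E → ℕ) :
    ∑ g : E, h g = h e + (h f + ∑ g ∈ (Finset.univ.erase e).erase f, h g) := by
  rw [Finset.add_sum_erase _ h (Finset.mem_erase.2 ⟨fun hc => hef hc.symm, Finset.mem_univ f⟩)]
  rw [Finset.add_sum_erase _ h (Finset.mem_univ e)]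

theorem sum_congr_two {e f : E} (h1 h2 : E → ℕ) (H : ∀ g, g ≠ e → g ≠ f → h1 g = h2 g) :
    ∑ g ∈ (Finset.univ.erase e).erase f, h1 g = ∑ g ∈ (Finset.univ.erase e).erase f, h2 g := by
  apply Finset.sum_congr rfl
  intro g hg
  rw [Finset.mem_erase, Finset.mem_erase] at hg
  exact H g hg.2.1 hg.1

open Classical in
theorem ite_eq_zero_of_not (P : Prop) (h : ¬ P) : (if P then (1:ℕ) else 0) = 0 := by
  rw [if_neg h]

open Classical in
theorem ite_congr_prop {P Q : Prop} (h : P ↔ Q) : (if P then (1:ℕ) else 0) = (if Q then 1 else 0) := by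
  by_cases hp : P
  · rw [if_pos hp, if_pos (h.1 hp)]
  · rw [if_neg hp, if_neg (fun hq => hp (h.2 hq))]

theorem other_inc {s : V} {e : E} (he : nlInc G s e) :
    G.fst e = G.other s e ∨ G.snd e = G.other s e := by
  unfold Multigraph.other
  by_cases h : G.fst e = s
  · rw [if_pos h]; exact Or.inr rfl
  · rw [if_neg h]; exact Or.inl rfl

theorem inc_self {s : V} {e : E} (he : nlInc G s e) : G.fst e = s ∨ G.snd e = s := he.2

theorem cross_s_iff (s : V) (e : E) : crossP G {s} e ↔ nlInc G s e := by
  unfold crossP nlInc nl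
  simp only [Finset.mem_singleton]
  constructor
  · rintro (⟨h1, h2⟩ | ⟨h1, h2⟩)
    · exact ⟨fun hc => h2 (by rw [← hc, h1]), Or.inl h1⟩
    · exact ⟨fun hc => h2 (by rw [hc, h1]), Or.inr h1⟩
  · rintro ⟨h1, h2 | h2⟩
    · exact Or.inl ⟨h2, fun hc => h1 (h2.trans hc.symm)⟩
    · exact Or.inr ⟨h2, fun hc => h1 (hc.trans h2.symm)⟩

section SplitLemmas
variable {s : V} {e f : E}

theorem splitG_dC (hef : e ≠ f) (he : nlInc G s e) (hf : nlInc G s f)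
    {X : Finset V} (hsX : s ∉ X) :
    dC (splitG G s e f) X + (if G.other s e ∈ X ∧ G.other s f ∈ X then 2 else 0) = dC G X := by
  classical
  have hce : crossP G X e ↔ G.other s e ∈ X := cross_single G he hsX
  have hcf : crossP G X f ↔ G.other s f ∈ X := cross_single G hf hsX
  have hse : crossP (splitG G s e f) X e ↔
      ((G.other s e ∈ X ∧ G.other s f ∉ X) ∨ (G.other s f ∈ X ∧ G.other s e ∉ X)) := by
    unfold crossP
    rw [splitG_fst_e G hef, splitG_snd_e G hef]
  have hsf : ¬ crossP (splitG G s e f) X f := by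
    unfold crossP
    rw [splitG_fst_f G hef, splitG_snd_f G hef]
    rintro (⟨h, h2⟩ | ⟨h, h2⟩) <;> exact h2 h
  unfold dC
  rw [cnt_eq_sum, cnt_eq_sum, sum_split_two hef, sum_split_two hef]
  rw [sum_congr_two (e := e) (f := f) _ (fun g => if crossP G X g then 1 else 0) (by
    intro g h1 h2
    unfold crossP
    rw [splitG_fst_other G h1 h2, splitG_snd_other G h1 h2])]
  rw [if_congr hce rfl rfl, if_congr hcf rfl rfl, if_congr hse rfl rfl, if_neg hsf]
  by_cases hu : G.other s e ∈ X <;> by_cases hv : G.other s f ∈ X <;>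
    simp [hu, hv] <;> omega

theorem splitG_ds (hef : e ≠ f) (he : nlInc G s e) (hf : nlInc G s f) :
    dC (splitG G s e f) {s} + 2 = dC G {s} := by
  classical
  have hse : ¬ crossP (splitG G s e f) {s} e := by
    unfold crossP
    rw [splitG_fst_e G hef, splitG_snd_e G hef]
    simp only [Finset.mem_singleton]
    rintro (⟨h, h2⟩ | ⟨h, h2⟩)
    · exact other_ne G he h
    · exact other_ne G hf h
  have hsf : ¬ crossP (splitG G s e f) {s} f := by
    unfold crossP
    rw [splitG_fst_f G hef, splitG_snd_f G hef]
    rintro (⟨h, h2⟩ | ⟨h, h2⟩) <;> exact h2 h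
  have hge : crossP G {s} e := (cross_s_iff G s e).2 he
  have hgf : crossP G {s} f := (cross_s_iff G s f).2 hf
  unfold dC
  rw [cnt_eq_sum, cnt_eq_sum, sum_split_two hef, sum_split_two hef]
  rw [sum_congr_two (e := e) (f := f) _ (fun g => if crossP G {s} g then 1 else 0) (by
    intro g h1 h2
    unfold crossP
    rw [splitG_fst_other G h1 h2, splitG_snd_other G h1 h2])]
  rw [if_neg hse, if_neg hsf, if_pos hge, if_pos hgf]
  omega

theorem splitG_Ins {A : Finset V} (hA : Ins G A) (hef : e ≠ f)
    (he : nlInc G s e) (hf : nlInc G s f) : Ins (splitG G s e f) A := by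
  intro g
  by_cases h1 : g = e
  · subst h1
    left
    rw [splitG_fst_e G hef, splitG_snd_e G hef]
    exact ⟨other_mem G hA he, other_mem G hA hf⟩
  · by_cases h2 : g = f
    · subst h2
      right
      rw [splitG_fst_f G hef, splitG_snd_f G hef]
    · rw [splitG_fst_other G h1 h2, splitG_snd_other G h1 h2]
      exact hA g

noncomputable def oF (g : E) (x : V) : Bool := if G.fst g = x then true else false

theorem tailO_congr {o o2 : E → Bool} {g : E} (h : o g = o2 g) :
    G.tailO o g = G.tailO o2 g ∧ G.headO o g = G.headO o2 g := by
  unfold Multigraph.tailO Multigraph.headO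
  rw [h]
  exact ⟨rfl, rfl⟩

theorem tailO_oF {o : E → Bool} {g : E} {x : V} (hog : o g = oF G g x)
    (hInc : G.fst g = x ∨ G.snd g = x) :
    G.tailO o g = x ∧ G.headO o g = G.other x g := by
  unfold oF at hog
  by_cases h : G.fst g = x
  · rw [if_pos h] at hog
    simp [Multigraph.tailO, Multigraph.headO, Multigraph.other, hog, h]
  · have h2 : G.snd g = x := hInc.resolve_left h
    rw [if_neg h] at hog
    simp [Multigraph.tailO, Multigraph.headO, Multigraph.other, hog, h, h2]

noncomputable def liftO (s : V) (e f : E) (o1 : E → Bool) : E → Bool := fun g =>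
  if g = e then (if o1 e then oF G e (G.other s e) else oF G e s)
  else if g = f then (if o1 e then oF G f s else oF G f (G.other s f))
  else o1 g

theorem liftO_other (hef : e ≠ f) (o1 : E → Bool) {g : E} (h1 : g ≠ e) (h2 : g ≠ f) :
    liftO G s e f o1 g = o1 g := by
  unfold liftO
  rw [if_neg h1, if_neg h2]

theorem liftO_true (hef : e ≠ f) (he : nlInc G s e) (hf : nlInc G s f)
    {o1 : E → Bool} (ho : o1 e = true) :
    G.tailO (liftO G s e f o1) e = G.other s e ∧ G.headO (liftO G s e f o1) e = s ∧
    G.tailO (liftO G s e f o1) f = s ∧ G.headO (liftO G s e f o1) f = G.other s f := by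
  have hoe : liftO G s e f o1 e = oF G e (G.other s e) := by
    unfold liftO
    rw [if_pos rfl, if_pos ho]
  have hof : liftO G s e f o1 f = oF G f s := by
    unfold liftO
    rw [if_neg (fun hc => hef hc.symm), if_pos rfl, if_pos ho]
  obtain ⟨ht1, hh1⟩ := tailO_oF G hoe (other_inc G he)
  obtain ⟨ht2, hh2⟩ := tailO_oF G hof (inc_self G hf)
  exact ⟨ht1, by rw [hh1, other_other G he], ht2, hh2⟩

theorem liftO_false (hef : e ≠ f) (he : nlInc G s e) (hf : nlInc G s f)
    {o1 : E → Bool} (ho : o1 e = false) :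
    G.tailO (liftO G s e f o1) e = s ∧ G.headO (liftO G s e f o1) e = G.other s e ∧
    G.tailO (liftO G s e f o1) f = G.other s f ∧ G.headO (liftO G s e f o1) f = s := by
  have hoe : liftO G s e f o1 e = oF G e s := by
    unfold liftO
    rw [if_pos rfl, ho]
    simp
  have hof : liftO G s e f o1 f = oF G f (G.other s f) := by
    unfold liftO
    rw [if_neg (fun hc => hef hc.symm), if_pos rfl, ho]
    simp
  obtain ⟨ht1, hh1⟩ := tailO_oF G hoe (inc_self G he)
  obtain ⟨ht2, hh2⟩ := tailO_oF G hof (other_inc G hf)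
  exact ⟨ht1, hh1, ht2, by rw [hh2, other_other G hf]⟩

theorem splitG_tail_e (hef : e ≠ f) (o1 : E → Bool) :
    (splitG G s e f).tailO o1 e = (if o1 e then G.other s e else G.other s f) ∧
    (splitG G s e f).headO o1 e = (if o1 e then G.other s f else G.other s e) := by
  unfold Multigraph.tailO Multigraph.headO
  rw [splitG_fst_e G hef, splitG_snd_e G hef]
  exact ⟨rfl, rfl⟩

theorem splitG_tail_f (hef : e ≠ f) (o1 : E → Bool) :
    (splitG G s e f).tailO o1 f = s ∧ (splitG G s e f).headO o1 f = s := by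
  unfold Multigraph.tailO Multigraph.headO
  rw [splitG_fst_f G hef, splitG_snd_f G hef]
  constructor <;> split_ifs <;> rfl

theorem splitG_tail_other (o1 : E → Bool) {g : E} (h1 : g ≠ e) (h2 : g ≠ f) :
    (splitG G s e f).tailO o1 g = G.tailO o1 g ∧ (splitG G s e f).headO o1 g = G.headO o1 g := by
  unfold Multigraph.tailO Multigraph.headO
  rw [splitG_fst_other G h1 h2, splitG_snd_other G h1 h2]
  exact ⟨rfl, rfl⟩

open Classical in
theorem cnt_split_two {e f : E} (hef : e ≠ f) (p : E → Prop) :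
    cnt p = (if p e then 1 else 0) +
      ((if p f then 1 else 0) + cnt (fun g => p g ∧ g ≠ e ∧ g ≠ f)) := by
  rw [cnt_eq_sum, cnt_eq_sum, sum_split_two hef, sum_split_two hef]
  rw [ite_eq_zero_of_not _ (fun hc => hc.2.1 rfl : ¬ (p e ∧ e ≠ e ∧ e ≠ f))]
  rw [ite_eq_zero_of_not _ (fun hc => hc.2.2 rfl : ¬ (p f ∧ f ≠ e ∧ f ≠ f))]
  congr 1
  congr 1
  rw [Nat.zero_add, Nat.zero_add]
  apply Finset.sum_congr rfl
  intro g hg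
  rw [Finset.mem_erase, Finset.mem_erase] at hg
  exact ite_congr_prop ⟨fun hp => ⟨hp, hg.2.1, hg.1⟩, fun hp => hp.1⟩

open Classical in
theorem cnt_add_one_le {p q : E → Prop} (chosen : E) (hch : q chosen) (hchp : ¬ p chosen)
    (hsub : ∀ g, p g → q g) : cnt p + 1 ≤ cnt q := by
  unfold cnt
  have h2 : chosen ∉ Finset.univ.filter p := by
    intro hc
    exact hchp (Finset.mem_filter.1 hc).2
  have h1 : insert chosen (Finset.univ.filter p) ⊆ Finset.univ.filter q := by
    intro g hg
    rw [Finset.mem_insert] at hg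
    rw [Finset.mem_filter]
    rcases hg with rfl | hg
    · exact ⟨Finset.mem_univ _, hch⟩
    · exact ⟨Finset.mem_univ _, hsub g (Finset.mem_filter.1 hg).2⟩
  have := Finset.card_le_card h1
  rw [Finset.card_insert_of_notMem h2] at this
  exact this

open Classical in
/-- lifting the orientation preserves out-capacity of every cut -/
theorem split_outC_le (hef : e ≠ f) (he : nlInc G s e) (hf : nlInc G s f)
    (o1 : E → Bool) (X : Finset V) :
    outC (splitG G s e f) o1 X ≤ outC G (liftO G s e f o1) X := by
  set o := liftO G s e f o1 with hoo
  have h1 := cnt_split_two (E := E) hef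
    (fun g => (splitG G s e f).tailO o1 g ∈ X ∧ (splitG G s e f).headO o1 g ∉ X)
  have h2 := cnt_split_two (E := E) hef
    (fun g => G.tailO o g ∈ X ∧ G.headO o g ∉ X)
  have h3 : cnt (fun g => ((splitG G s e f).tailO o1 g ∈ X ∧ (splitG G s e f).headO o1 g ∉ X)
        ∧ g ≠ e ∧ g ≠ f)
      = cnt (fun g => (G.tailO o g ∈ X ∧ G.headO o g ∉ X) ∧ g ≠ e ∧ g ≠ f) := by
    apply cnt_congr
    intro g
    by_cases hge : g = e
    · constructor
      · rintro ⟨_, hc, _⟩; exact absurd hge hc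
      · rintro ⟨_, hc, _⟩; exact absurd hge hc
    · by_cases hgf : g = f
      · constructor
        · rintro ⟨_, _, hc⟩; exact absurd hgf hc
        · rintro ⟨_, _, hc⟩; exact absurd hgf hc
      · obtain ⟨ht, hh⟩ := splitG_tail_other G (s := s) (e := e) (f := f) o1 hge hgf
        obtain ⟨ht2, hh2⟩ := tailO_congr G (o := o) (o2 := o1) (g := g)
          (liftO_other G hef o1 hge hgf)
        rw [ht, hh, ht2, hh2]
  unfold outC
  rw [h1, h2, h3]
  have hsf := splitG_tail_f G (s := s) hef o1
  have hse := splitG_tail_e G (s := s) hef o1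
  have hPf : ¬ ((splitG G s e f).tailO o1 f ∈ X ∧ (splitG G s e f).headO o1 f ∉ X) := by
    rw [hsf.1, hsf.2]
    rintro ⟨hc1, hc2⟩
    exact hc2 hc1
  rw [ite_eq_zero_of_not _ hPf]
  cases ho : o1 e
  · obtain ⟨a1, a2, a3, a4⟩ := liftO_false G hef he hf ho
    have hPe : ((splitG G s e f).tailO o1 e ∈ X ∧ (splitG G s e f).headO o1 e ∉ X)
        ↔ (G.other s f ∈ X ∧ G.other s e ∉ X) := by
      rw [hse.1, hse.2, ho]
      simp
    have hQe : (G.tailO o e ∈ X ∧ G.headO o e ∉ X) ↔ (s ∈ X ∧ G.other s e ∉ X) := by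
      rw [a1, a2]
    have hQf : (G.tailO o f ∈ X ∧ G.headO o f ∉ X) ↔ (G.other s f ∈ X ∧ s ∉ X) := by
      rw [a3, a4]
    rw [ite_congr_prop hPe, ite_congr_prop hQe, ite_congr_prop hQf]
    by_cases hu : G.other s e ∈ X <;> by_cases hv : G.other s f ∈ X <;> by_cases hs : s ∈ X <;>
      simp [hu, hv, hs] <;> omega
  · obtain ⟨a1, a2, a3, a4⟩ := liftO_true G hef he hf ho
    have hPe : ((splitG G s e f).tailO o1 e ∈ X ∧ (splitG G s e f).headO o1 e ∉ X)
        ↔ (G.other s e ∈ X ∧ G.other s f ∉ X) := by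
      rw [hse.1, hse.2, ho]
      simp
    have hQe : (G.tailO o e ∈ X ∧ G.headO o e ∉ X) ↔ (G.other s e ∈ X ∧ s ∉ X) := by
      rw [a1, a2]
    have hQf : (G.tailO o f ∈ X ∧ G.headO o f ∉ X) ↔ (s ∈ X ∧ G.other s f ∉ X) := by
      rw [a3, a4]
    rw [ite_congr_prop hPe, ite_congr_prop hQe, ite_congr_prop hQf]
    by_cases hu : G.other s e ∈ X <;> by_cases hv : G.other s f ∈ X <;> by_cases hs : s ∈ X <;>
      simp [hu, hv, hs] <;> omega

open Classical in
theorem split_sIn (hef : e ≠ f) (he : nlInc G s e) (hf : nlInc G s f) (o1 : E → Bool) :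
    cnt (fun g => nl (splitG G s e f) g ∧ (splitG G s e f).headO o1 g = s) + 1
      ≤ cnt (fun g => nl G g ∧ G.headO (liftO G s e f o1) g = s) := by
  classical
  set o := liftO G s e f o1 with hoo
  set chosen := (if o1 e then e else f) with hch
  set P1 := fun g => nl (splitG G s e f) g ∧ (splitG G s e f).headO o1 g = s with hP1
  have hP1e : ¬ P1 e := by
    rintro ⟨_, hh⟩
    rw [(splitG_tail_e G hef o1).2] at hh
    split_ifs at hh
    · exact other_ne G hf hh
    · exact other_ne G he hh
  have hP1f : ¬ P1 f := by
    rintro ⟨hnl, _⟩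
    exact hnl (by rw [splitG_fst_f G hef, splitG_snd_f G hef])
  have hsub : ∀ g, P1 g → (nl G g ∧ G.headO o g = s) := by
    intro g hg
    have h1 : g ≠ e := fun hc => hP1e (hc ▸ hg)
    have h2 : g ≠ f := fun hc => hP1f (hc ▸ hg)
    obtain ⟨hnl, hh⟩ := hg
    obtain ⟨_, hhead⟩ := splitG_tail_other G (s := s) (e := e) (f := f) o1 h1 h2
    have hog : o g = o1 g := liftO_other G hef o1 h1 h2
    constructor
    · intro hc
      apply hnl
      show (splitG G s e f).fst g = (splitG G s e f).snd g
      rw [splitG_fst_other G h1 h2, splitG_snd_other G h1 h2]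
      exact hc
    · rw [← hh, hhead]
      exact ((tailO_congr G (o := o) (o2 := o1) (g := g) hog).2)
  have hchP : nl G chosen ∧ G.headO o chosen = s := by
    rw [hch]
    cases ho : o1 e
    · simp only [ho, Bool.false_eq_true, if_false]
      exact ⟨hf.1, (liftO_false G hef he hf ho).2.2.2⟩
    · simp only [ho, if_true]
      exact ⟨he.1, (liftO_true G hef he hf ho).2.1⟩
  have hchn : ¬ P1 chosen := by
    rw [hch]
    by_cases ho : o1 e = true
    · rw [if_pos ho]; exact hP1e
    · rw [if_neg ho]; exact hP1f
  exact cnt_add_one_le chosen hchP hchn hsub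

open Classical in
theorem split_sOut (hef : e ≠ f) (he : nlInc G s e) (hf : nlInc G s f) (o1 : E → Bool) :
    cnt (fun g => nl (splitG G s e f) g ∧ (splitG G s e f).tailO o1 g = s) + 1
      ≤ cnt (fun g => nl G g ∧ G.tailO (liftO G s e f o1) g = s) := by
  classical
  set o := liftO G s e f o1 with hoo
  set chosen := (if o1 e then f else e) with hch
  set P1 := fun g => nl (splitG G s e f) g ∧ (splitG G s e f).tailO o1 g = s with hP1
  have hP1e : ¬ P1 e := by
    rintro ⟨_, hh⟩
    rw [(splitG_tail_e G hef o1).1] at hh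
    split_ifs at hh
    · exact other_ne G he hh
    · exact other_ne G hf hh
  have hP1f : ¬ P1 f := by
    rintro ⟨hnl, _⟩
    exact hnl (by rw [splitG_fst_f G hef, splitG_snd_f G hef])
  have hsub : ∀ g, P1 g → (nl G g ∧ G.tailO o g = s) := by
    intro g hg
    have h1 : g ≠ e := fun hc => hP1e (hc ▸ hg)
    have h2 : g ≠ f := fun hc => hP1f (hc ▸ hg)
    obtain ⟨hnl, hh⟩ := hg
    obtain ⟨htail, _⟩ := splitG_tail_other G (s := s) (e := e) (f := f) o1 h1 h2
    have hog : o g = o1 g := liftO_other G hef o1 h1 h2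
    constructor
    · intro hc
      apply hnl
      show (splitG G s e f).fst g = (splitG G s e f).snd g
      rw [splitG_fst_other G h1 h2, splitG_snd_other G h1 h2]
      exact hc
    · rw [← hh, htail]
      exact ((tailO_congr G (o := o) (o2 := o1) (g := g) hog).1)
  have hchP : nl G chosen ∧ G.tailO o chosen = s := by
    rw [hch]
    cases ho : o1 e
    · simp only [ho, Bool.false_eq_true, if_false]
      exact ⟨he.1, (liftO_false G hef he hf ho).1⟩
    · simp only [ho, if_true]
      exact ⟨hf.1, (liftO_true G hef he hf ho).2.2.1⟩
  have hchn : ¬ P1 chosen := by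
    rw [hch]
    by_cases ho : o1 e = true
    · rw [if_pos ho]; exact hP1f
    · rw [if_neg ho]; exact hP1e
  exact cnt_add_one_le chosen hchP hchn hsub

end SplitLemmas

end NWAux

namespace NWAux
set_option linter.unusedSectionVars false
set_option linter.unusedVariables false
open Finset

variable {V E : Type} [Fintype V] [Fintype E] [DecidableEq V] [DecidableEq E]
variable (G : Multigraph V E)

def validS (A X : Finset V) : Prop := X ⊆ A ∧ X.Nonempty ∧ (A \ X).Nonempty

theorem validS_not_mem {A X : Finset V} {s : V} (h : validS (A.erase s) X) : s ∉ X :=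
  fun hc => (Finset.mem_erase.1 (h.1 hc)).1 rfl

theorem exists_max_superset {P : Finset V → Prop} {B : Finset V} (hsub : ∀ X, P X → X ⊆ B)
    {X0 : Finset V} (h0 : P X0) :
    ∃ Y, (P Y ∧ ∀ Z, P Z → Y ⊆ Z → Z = Y) ∧ X0 ⊆ Y := by
  classical
  set S := B.powerset.filter (fun X => P X ∧ X0 ⊆ X) with hS
  have hSne : S.Nonempty := ⟨X0, by
    rw [hS, Finset.mem_filter, Finset.mem_powerset]
    exact ⟨hsub X0 h0, h0, Finset.Subset.refl X0⟩⟩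
  obtain ⟨Y, hYS, hmax⟩ := S.exists_max_image Finset.card hSne
  rw [hS, Finset.mem_filter, Finset.mem_powerset] at hYS
  obtain ⟨hYB, hPY, hX0Y⟩ := hYS
  refine ⟨Y, ⟨hPY, ?_⟩, hX0Y⟩
  intro Z hPZ hYZ
  by_contra hne
  have hss : Y ⊂ Z := HasSubset.Subset.ssubset_of_ne hYZ (fun h => hne h.symm)
  have hZS : Z ∈ S := by
    rw [hS, Finset.mem_filter, Finset.mem_powerset]
    exact ⟨hsub Z hPZ, hPZ, hX0Y.trans hYZ⟩
  have h1 := hmax Z hZS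
  have h2 := Finset.card_lt_card hss
  omega

theorem ds_le_b {s : V} {Y : Finset V} (hsY : s ∉ Y)
    (hcov : ∀ g, nlInc G s g → G.other s g ∈ Y) :
    dC G {s} ≤ betC G {s} Y := by
  unfold dC betC
  apply cnt_mono
  intro g hg
  have h1 := (cross_s_iff G s g).1 hg
  exact (bmem G hsY g).2 ⟨h1, hcov g h1⟩

theorem betP_of_inc {s : V} {e : E} {P Q : Finset V} (he : nlInc G s e)
    (hP : G.other s e ∈ P) (hQ : s ∈ Q) : betP G P Q e := by
  by_cases h2 : G.fst e = s
  · have ho : G.other s e = G.snd e := by unfold Multigraph.other; rw [if_pos h2]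
    exact Or.inr ⟨ho ▸ hP, h2 ▸ hQ⟩
  · have h : G.snd e = s := he.2.resolve_left h2
    have ho : G.other s e = G.fst e := by unfold Multigraph.other; rw [if_neg h2]
    exact Or.inl ⟨ho ▸ hP, h ▸ hQ⟩

section Lovasz

variable {k : ℕ} {A : Finset V} {s : V}

/-- the bound 2·b(X) ≤ d(s) for dangerous sets -/
theorem b_le (hIns : Ins G A) (hsA : s ∈ A)
    (HC : ∀ Y, validS (A.erase s) Y → 2*k ≤ dC G Y)
    (hEven : Even (dC G {s})) {X : Finset V} (hX : validS (A.erase s) X)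
    (hdang : dC G X ≤ 2*k+1) :
    2 * betC G {s} X ≤ dC G {s} := by
  have hsX : s ∉ X := validS_not_mem hX
  have hXA : X ⊆ A := hX.1.trans (Finset.erase_subset s A)
  have hI3 := I3 G (s := s) (X := X) hsX
  have hcompl := dC_compl_inside G hIns hXA hsA hsX
  have hXstar : validS (A.erase s) (A \ insert s X) := by
    refine ⟨?_, ?_, ?_⟩
    · intro y hy
      rw [Finset.mem_sdiff, Finset.mem_insert] at hy
      push_neg at hy
      rw [Finset.mem_erase]
      exact ⟨hy.2.1, hy.1⟩
    · obtain ⟨y, hy⟩ := hX.2.2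
      rw [Finset.mem_sdiff, Finset.mem_erase] at hy
      refine ⟨y, ?_⟩
      rw [Finset.mem_sdiff, Finset.mem_insert]
      push_neg
      exact ⟨hy.1.2, hy.1.1, hy.2⟩
    · obtain ⟨x, hx⟩ := hX.2.1
      refine ⟨x, ?_⟩
      rw [Finset.mem_sdiff, Finset.mem_sdiff]
      push_neg
      exact ⟨hX.1 hx, fun _ => Finset.mem_insert.2 (Or.inr hx)⟩
  have hHC := HC _ hXstar
  obtain ⟨m, hm⟩ := hEven
  omega

theorem lovasz (hk : 1 ≤ k) (hIns : Ins G A) (hsA : s ∈ A)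
    (HC : ∀ Y, validS (A.erase s) Y → 2*k ≤ dC G Y)
    (hEven : Even (dC G {s})) {e : E} (he : nlInc G s e) :
    ∃ f, f ≠ e ∧ nlInc G s f ∧
      ∀ X, validS (A.erase s) X → G.other s e ∈ X → G.other s f ∈ X → 2*k+2 ≤ dC G X := by
  by_contra hcon
  push_neg at hcon
  set B := A.erase s with hB
  set u := G.other s e with hu
  have huB : u ∈ B := by
    rw [hB, Finset.mem_erase]
    exact ⟨other_ne G he, other_mem G hIns he⟩
  set dang := fun X : Finset V => validS B X ∧ dC G X ≤ 2*k+1 ∧ u ∈ X with hdang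
  set mx := fun X : Finset V => dang X ∧ ∀ Y, dang Y → X ⊆ Y → Y = X with hmx
  have hmaxex : ∀ X, dang X → ∃ Y, mx Y ∧ X ⊆ Y := by
    intro X hX
    exact exists_max_superset (fun Z hZ => hZ.1.1) hX
  -- degree of s ≥ 2, and a second edge exists
  have hds1 : 1 ≤ dC G {s} := by
    rw [ds_eq_cnt_nlInc]
    have h := le_cnt (p := nlInc G s) {e} (fun g hg => by
      rw [Finset.mem_singleton] at hg
      subst hg
      exact he)
    simpa using h
  have hds2 : 2 ≤ dC G {s} := by
    obtain ⟨m, hm⟩ := hEven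
    omega
  have hf0 : ∃ f0, f0 ≠ e ∧ nlInc G s f0 := by
    have h2 : 1 < cnt (nlInc G s) := by rw [← ds_eq_cnt_nlInc]; omega
    classical
    rw [cnt, Finset.one_lt_card] at h2
    obtain ⟨a, ha, b, hb, hab⟩ := h2
    rw [Finset.mem_filter] at ha hb
    by_cases hae : a = e
    · exact ⟨b, by rw [← hae]; exact fun hc => hab hc.symm, hb.2⟩
    · exact ⟨a, hae, ha.2⟩
  obtain ⟨f0, hf0e, hf0i⟩ := hf0
  obtain ⟨Xf0, hXf0v, hXf0u, hXf0o, hXf0d⟩ := hcon f0 hf0e hf0i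
  have hdangX0 : dang Xf0 := ⟨hXf0v, by omega, hXf0u⟩
  -- cover by maximal dangerous sets
  have hcover : ∀ g, nlInc G s g → ∃ Y, mx Y ∧ G.other s g ∈ Y := by
    intro g hg
    by_cases hge : g = e
    · obtain ⟨Y, hY, hsub⟩ := hmaxex Xf0 hdangX0
      subst hge
      exact ⟨Y, hY, hsub hXf0u⟩
    · obtain ⟨X, hXv, hXu, hXo, hXd⟩ := hcon g hge hg
      obtain ⟨Y, hY, hsub⟩ := hmaxex X ⟨hXv, by omega, hXu⟩
      exact ⟨Y, hY, hsub hXo⟩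
  have hble : ∀ X, dang X → 2 * betC G {s} X ≤ dC G {s} := by
    intro X hX
    exact b_le G hIns hsA HC hEven hX.1 hX.2.1
  have hbu : ∀ X, dang X → 1 ≤ betC G {s} X := by
    intro X hX
    exact bC_ge_one G (validS_not_mem hX.1) he hX.2.2
  -- pair analysis
  have hpair : ∀ X Y, mx X → mx Y → X ≠ Y →
      (B \ (X ∪ Y)).Nonempty ∧ dC G (X ∩ Y) = 2*k ∧
      (∀ g, betP G (X ∩ Y) (Finset.univ \ (X ∪ Y)) g → g = e) := by
    intro X Y hmX hmY hne
    have hdX := hmX.1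
    have hdY := hmY.1
    have hsX : s ∉ X := validS_not_mem hdX.1
    have hsY : s ∉ Y := validS_not_mem hdY.1
    have hXnsY : ¬ X ⊆ Y := fun h => hne ((hmX.2 Y hdY h).symm ▸ rfl)
    have hYnsX : ¬ Y ⊆ X := fun h => hne (hmY.2 X hdX h)
    have hBU : (B \ (X ∪ Y)).Nonempty := by
      by_contra hemp
      rw [Finset.not_nonempty_iff_eq_empty, Finset.sdiff_eq_empty_iff_subset] at hemp
      have hcov : ∀ g, nlInc G s g → G.other s g ∈ X ∪ Y := by
        intro g hg
        apply hemp
        rw [hB, Finset.mem_erase]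
        exact ⟨other_ne G hg, other_mem G hIns hg⟩
      have h1 : dC G {s} ≤ betC G {s} (X ∪ Y) := by
        apply ds_le_b G _ hcov
        rw [Finset.mem_union]
        rintro (h | h) <;> [exact hsX h; exact hsY h]
      have h2 := I4 G (s := s) hsX hsY
      have h3 : 1 ≤ betC G {s} (X ∩ Y) := by
        apply bC_ge_one G _ he (Finset.mem_inter.2 ⟨hdX.2.2, hdY.2.2⟩)
        rw [Finset.mem_inter]
        rintro ⟨h, _⟩
        exact hsX h
      have h4 := hble X hdX
      have h5 := hble Y hdY
      omega
    have hvU : validS B (X ∪ Y) := by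
      refine ⟨Finset.union_subset hdX.1.1 hdY.1.1, ⟨u, Finset.mem_union_left _ hdX.2.2⟩, hBU⟩
    have hU : 2*k+2 ≤ dC G (X ∪ Y) := by
      by_contra hc
      push_neg at hc
      have hdU : dang (X ∪ Y) := ⟨hvU, by omega, Finset.mem_union_left _ hdX.2.2⟩
      have := hmX.2 (X ∪ Y) hdU Finset.subset_union_left
      exact hYnsX (by rw [← this]; exact Finset.subset_union_right)
    have hvI : validS B (X ∩ Y) := by
      refine ⟨(Finset.inter_subset_left).trans hdX.1.1,
        ⟨u, Finset.mem_inter.2 ⟨hdX.2.2, hdY.2.2⟩⟩, ?_⟩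
      obtain ⟨y, hy⟩ := hdX.1.2.2
      rw [Finset.mem_sdiff] at hy
      exact ⟨y, Finset.mem_sdiff.2 ⟨hy.1, fun hc => hy.2 (Finset.mem_inter.1 hc).1⟩⟩
    have hvXY : validS B (X \ Y) := by
      obtain ⟨x, hx1, hx2⟩ := Finset.not_subset.1 hXnsY
      refine ⟨(Finset.sdiff_subset).trans hdX.1.1, ⟨x, Finset.mem_sdiff.2 ⟨hx1, hx2⟩⟩, ?_⟩
      obtain ⟨y, hy⟩ := hdX.1.2.2
      rw [Finset.mem_sdiff] at hy
      exact ⟨y, Finset.mem_sdiff.2 ⟨hy.1, fun hc => hy.2 (Finset.mem_sdiff.1 hc).1⟩⟩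
    have hvYX : validS B (Y \ X) := by
      obtain ⟨x, hx1, hx2⟩ := Finset.not_subset.1 hYnsX
      refine ⟨(Finset.sdiff_subset).trans hdY.1.1, ⟨x, Finset.mem_sdiff.2 ⟨hx1, hx2⟩⟩, ?_⟩
      obtain ⟨y, hy⟩ := hdY.1.2.2
      rw [Finset.mem_sdiff] at hy
      exact ⟨y, Finset.mem_sdiff.2 ⟨hy.1, fun hc => hy.2 (Finset.mem_sdiff.1 hc).1⟩⟩
    have hI1 := I1 G X Y
    have hI2 := I2 G X Y
    have hHCI := HC _ hvI
    have hHCXY := HC _ hvXY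
    have hHCYX := HC _ hvYX
    have hdXd := hdX.2.1
    have hdYd := hdY.2.1
    have hIeq : dC G (X ∩ Y) = 2*k := by omega
    have hbet1 : betC G (X ∩ Y) ((X ∪ Y)ᶜ) ≤ 1 := by omega
    have hein : betP G (X ∩ Y) ((X ∪ Y)ᶜ) e := by
      apply betP_of_inc G he (Finset.mem_inter.2 ⟨hdX.2.2, hdY.2.2⟩)
      rw [Finset.mem_compl, Finset.mem_union]
      rintro (h | h) <;> [exact hsX h; exact hsY h]
    have huniq : ∀ g, betP G (X ∩ Y) ((X ∪ Y)ᶜ) g → g = e := by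
      intro g hg
      exact cnt_unique hbet1 hein hg
    refine ⟨hBU, hIeq, ?_⟩
    intro g hg
    apply huniq
    have : Finset.univ \ (X ∪ Y) = (X ∪ Y)ᶜ := by
      ext z
      simp [Finset.mem_compl]
    rw [this] at hg
    exact hg
  -- trichotomy on the number of maximal dangerous sets
  by_cases h3 : ∃ X1 X2 X3, mx X1 ∧ mx X2 ∧ mx X3 ∧ X1 ≠ X2 ∧ X1 ≠ X3 ∧ X2 ≠ X3
  · obtain ⟨X1, X2, X3, hm1, hm2, hm3, n12, n13, n23⟩ := h3
    obtain ⟨hBU12, hI12, hq12⟩ := hpair X1 X2 hm1 hm2 n12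
    obtain ⟨hBU13, hI13, hq13⟩ := hpair X1 X3 hm1 hm3 n13
    obtain ⟨hBU23, hI23, hq23⟩ := hpair X2 X3 hm2 hm3 n23
    -- pairwise intersections lie in the third set
    have hsubthird : ∀ Y1 Y2 Y3, mx Y1 → mx Y2 → mx Y3 →
        dC G (Y1 ∩ Y2) = 2*k → (B \ (Y3 ∪ Y1)).Nonempty → Y1 ∩ Y2 ⊆ Y3 := by
      intro Y1 Y2 Y3 hmY1 hmY2 hmY3 hIeq hBU
      have hI := I1 G Y3 (Y1 ∩ Y2)
      have huY12 : u ∈ Y1 ∩ Y2 := Finset.mem_inter.2 ⟨hmY1.1.2.2, hmY2.1.2.2⟩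
      have hint : validS B (Y3 ∩ (Y1 ∩ Y2)) := by
        refine ⟨(Finset.inter_subset_left).trans hmY3.1.1.1,
          ⟨u, Finset.mem_inter.2 ⟨hmY3.1.2.2, huY12⟩⟩, ?_⟩
        obtain ⟨y, hy⟩ := hmY3.1.1.2.2
        rw [Finset.mem_sdiff] at hy
        exact ⟨y, Finset.mem_sdiff.2 ⟨hy.1, fun hc => hy.2 (Finset.mem_inter.1 hc).1⟩⟩
      have hHCint := HC _ hint
      have hZd : dC G (Y3 ∪ (Y1 ∩ Y2)) ≤ 2*k+1 := by
        have := hmY3.1.2.1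
        omega
      have hZvalid : validS B (Y3 ∪ (Y1 ∩ Y2)) := by
        refine ⟨Finset.union_subset hmY3.1.1.1 ((Finset.inter_subset_left).trans hmY1.1.1.1),
          ⟨u, Finset.mem_union_left _ hmY3.1.2.2⟩, ?_⟩
        obtain ⟨y, hy⟩ := hBU
        rw [Finset.mem_sdiff, Finset.mem_union] at hy
        push_neg at hy
        refine ⟨y, Finset.mem_sdiff.2 ⟨hy.1, ?_⟩⟩
        rw [Finset.mem_union]
        rintro (hc | hc)
        · exact hy.2.1 hc
        · exact hy.2.2 (Finset.mem_inter.1 hc).1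
      have hdZ : dang (Y3 ∪ (Y1 ∩ Y2)) := ⟨hZvalid, hZd, Finset.mem_union_left _ hmY3.1.2.2⟩
      have heq := hmY3.2 _ hdZ Finset.subset_union_left
      intro z hz
      have : z ∈ Y3 ∪ (Y1 ∩ Y2) := Finset.mem_union_right _ hz
      rw [heq] at this
      exact this
    have hs12 : X1 ∩ X2 ⊆ X3 := hsubthird X1 X2 X3 hm1 hm2 hm3 hI12 (by
      obtain ⟨y, hy⟩ := hBU13
      rw [Finset.mem_sdiff, Finset.mem_union] at hy
      exact ⟨y, by rw [Finset.mem_sdiff, Finset.mem_union]; tauto⟩)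
    have hs13 : X1 ∩ X3 ⊆ X2 := hsubthird X1 X3 X2 hm1 hm3 hm2 hI13 (by
      obtain ⟨y, hy⟩ := hBU12
      rw [Finset.mem_sdiff, Finset.mem_union] at hy
      exact ⟨y, by rw [Finset.mem_sdiff, Finset.mem_union]; tauto⟩)
    have hs23 : X2 ∩ X3 ⊆ X1 := hsubthird X2 X3 X1 hm2 hm3 hm1 hI23 (by
      obtain ⟨y, hy⟩ := hBU12
      rw [Finset.mem_sdiff, Finset.mem_union] at hy
      exact ⟨y, by rw [Finset.mem_sdiff, Finset.mem_union]; tauto⟩)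
    -- every edge crossing D equals e
    set D := X1 ∩ X2 with hD
    have hDuniq : ∀ a b : V, a ∈ D → b ∉ D →
        ∀ g, ((G.fst g = a ∧ G.snd g = b) ∨ (G.fst g = b ∧ G.snd g = a)) → g = e := by
      intro a b ha hb g hg
      have haX1 : a ∈ X1 := (Finset.mem_inter.1 ha).1
      have haX2 : a ∈ X2 := (Finset.mem_inter.1 ha).2
      have haX3 : a ∈ X3 := hs12 ha
      have hbetP : ∀ (P Q : Finset V), a ∈ P → b ∈ Q → betP G P Q g := by
        intro P Q hP hQ
        rcases hg with ⟨h1, h2⟩ | ⟨h1, h2⟩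
        · exact Or.inl ⟨h1 ▸ hP, h2 ▸ hQ⟩
        · exact Or.inr ⟨h2 ▸ hP, h1 ▸ hQ⟩
      by_cases hb1 : b ∈ X1
      · apply hq23
        apply hbetP
        · exact Finset.mem_inter.2 ⟨haX2, haX3⟩
        · rw [Finset.mem_sdiff, Finset.mem_union]
          push_neg
          refine ⟨Finset.mem_univ _, fun hb2 => hb (Finset.mem_inter.2 ⟨hb1, hb2⟩), ?_⟩
          intro hb3
          exact hb (Finset.mem_inter.2 ⟨hb1, hs13 (Finset.mem_inter.2 ⟨hb1, hb3⟩)⟩)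
      · by_cases hb2 : b ∈ X2
        · apply hq13
          apply hbetP
          · exact Finset.mem_inter.2 ⟨haX1, haX3⟩
          · rw [Finset.mem_sdiff, Finset.mem_union]
            push_neg
            refine ⟨Finset.mem_univ _, hb1, ?_⟩
            intro hb3
            exact hb1 (hs23 (Finset.mem_inter.2 ⟨hb2, hb3⟩))
        · apply hq12
          apply hbetP
          · exact ha
          · rw [Finset.mem_sdiff, Finset.mem_union]
            push_neg
            exact ⟨Finset.mem_univ _, hb1, hb2⟩
    have hDle : dC G D ≤ 1 := by
      apply cnt_le_one e
      intro g hg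
      rcases hg with ⟨h1, h2⟩ | ⟨h1, h2⟩
      · exact hDuniq _ _ h1 h2 g (Or.inl ⟨rfl, rfl⟩)
      · exact hDuniq _ _ h1 h2 g (Or.inr ⟨rfl, rfl⟩)
    have hvD : validS B D := by
      refine ⟨(Finset.inter_subset_left).trans hm1.1.1.1,
        ⟨u, Finset.mem_inter.2 ⟨hm1.1.2.2, hm2.1.2.2⟩⟩, ?_⟩
      obtain ⟨y, hy⟩ := hm1.1.1.2.2
      rw [Finset.mem_sdiff] at hy
      exact ⟨y, Finset.mem_sdiff.2 ⟨hy.1, fun hc => hy.2 (Finset.mem_inter.1 hc).1⟩⟩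
    have := HC _ hvD
    omega
  · by_cases h2 : ∃ X1 X2, mx X1 ∧ mx X2 ∧ X1 ≠ X2
    · obtain ⟨X1, X2, hm1, hm2, hne⟩ := h2
      have hsX1 : s ∉ X1 := validS_not_mem hm1.1.1
      have hsX2 : s ∉ X2 := validS_not_mem hm2.1.1
      have hcov : ∀ g, nlInc G s g → G.other s g ∈ X1 ∪ X2 := by
        intro g hg
        obtain ⟨Y, hmY, ho⟩ := hcover g hg
        have : Y = X1 ∨ Y = X2 := by
          by_contra hc
          push_neg at hc
          exact h3 ⟨X1, X2, Y, hm1, hm2, hmY, hne, fun h => hc.1 h.symm, fun h => hc.2 h.symm⟩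
        rcases this with rfl | rfl
        · exact Finset.mem_union_left _ ho
        · exact Finset.mem_union_right _ ho
      have h1 : dC G {s} ≤ betC G {s} (X1 ∪ X2) := by
        apply ds_le_b G _ hcov
        rw [Finset.mem_union]
        rintro (h | h) <;> [exact hsX1 h; exact hsX2 h]
      have hI4 := I4 G (s := s) hsX1 hsX2
      have h3b : 1 ≤ betC G {s} (X1 ∩ X2) := by
        apply bC_ge_one G _ he (Finset.mem_inter.2 ⟨hm1.1.2.2, hm2.1.2.2⟩)
        rw [Finset.mem_inter]
        rintro ⟨h, _⟩
        exact hsX1 h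
      have h4 := hble X1 hm1.1
      have h5 := hble X2 hm2.1
      omega
    · obtain ⟨X1, hm1, _⟩ := hmaxex Xf0 hdangX0
      have hsX1 : s ∉ X1 := validS_not_mem hm1.1.1
      have hcov : ∀ g, nlInc G s g → G.other s g ∈ X1 := by
        intro g hg
        obtain ⟨Y, hmY, ho⟩ := hcover g hg
        have : Y = X1 := by
          by_contra hc
          exact h2 ⟨Y, X1, hmY, hm1, hc⟩
        rw [← this]
        exact ho
      have h1 : dC G {s} ≤ betC G {s} X1 := ds_le_b G hsX1 hcov
      have h4 := hble X1 hm1.1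
      omega

end Lovasz

end NWAux

namespace NWAux
set_option linter.unusedSectionVars false
set_option linter.unusedVariables false
open Finset

variable {V E : Type} [Fintype V] [Fintype E] [DecidableEq V] [DecidableEq E]
variable (G : Multigraph V E)

open Classical in
theorem cnt_split_one (g0 : E) (p : E → Prop) :
    cnt p = (if p g0 then 1 else 0) + cnt (fun g => p g ∧ g ≠ g0) := by
  rw [cnt_eq_sum, cnt_eq_sum]
  rw [← Finset.add_sum_erase _ _ (Finset.mem_univ g0)]
  rw [← Finset.add_sum_erase _ _ (Finset.mem_univ g0)]
  rw [ite_eq_zero_of_not _ (fun hc => hc.2 rfl : ¬ (p g0 ∧ g0 ≠ g0))]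
  rw [Nat.zero_add]
  congr 1
  apply Finset.sum_congr rfl
  intro g hg
  rw [Finset.mem_erase] at hg
  exact ite_congr_prop ⟨fun hp => ⟨hp, hg.1⟩, fun hp => hp.1⟩

theorem cnt_le_fincard (p : E → Prop) : cnt p ≤ Fintype.card E := by
  classical
  rw [cnt, ← Finset.card_univ]
  exact Finset.card_filter_le _ _

noncomputable def loopify (g0 : E) : Multigraph V E where
  fst := fun h => if h = g0 then G.fst g0 else G.fst h
  snd := fun h => if h = g0 then G.fst g0 else G.snd h

theorem loopify_self (g0 : E) : (loopify G g0).fst g0 = G.fst g0 ∧ (loopify G g0).snd g0 = G.fst g0 := by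
  unfold loopify
  simp

theorem loopify_other {g0 g : E} (h : g ≠ g0) :
    (loopify G g0).fst g = G.fst g ∧ (loopify G g0).snd g = G.snd g := by
  unfold loopify
  simp [h]

theorem loopify_not_nl (g0 : E) : ¬ nl (loopify G g0) g0 := by
  intro hc
  exact hc (((loopify_self G g0).1).trans ((loopify_self G g0).2).symm)

theorem loopify_nl {g0 g : E} (h : g ≠ g0) : nl (loopify G g0) g ↔ nl G g := by
  unfold nl
  rw [(loopify_other G h).1, (loopify_other G h).2]

theorem loopify_Ins {A : Finset V} (hA : Ins G A) (g0 : E) : Ins (loopify G g0) A := by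
  intro g
  by_cases h : g = g0
  · subst h
    right
    exact ((loopify_self G g).1).trans ((loopify_self G g).2).symm
  · rw [(loopify_other G h).1, (loopify_other G h).2]
    exact hA g

open Classical in
theorem loopify_dC (g0 : E) (X : Finset V) :
    dC (loopify G g0) X + (if crossP G X g0 then 1 else 0) = dC G X := by
  unfold dC
  rw [cnt_split_one g0 (crossP (loopify G g0) X), cnt_split_one g0 (crossP G X)]
  have h0 : ¬ crossP (loopify G g0) X g0 := by
    unfold crossP
    rw [(loopify_self G g0).1, (loopify_self G g0).2]
    rintro (⟨h1, h2⟩ | ⟨h1, h2⟩) <;> exact h2 h1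
  rw [ite_eq_zero_of_not _ h0, Nat.zero_add]
  have hcongr : cnt (fun g => crossP (loopify G g0) X g ∧ g ≠ g0)
      = cnt (fun g => crossP G X g ∧ g ≠ g0) := by
    apply cnt_congr
    intro g
    by_cases h : g = g0
    · constructor
      · rintro ⟨_, hc⟩; exact absurd h hc
      · rintro ⟨_, hc⟩; exact absurd h hc
    · unfold crossP
      rw [(loopify_other G h).1, (loopify_other G h).2]
  rw [hcongr]
  omega

theorem loopify_outC_le (g0 : E) (o : E → Bool) (X : Finset V) :
    outC (loopify G g0) o X ≤ outC G o X := by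
  unfold outC
  rw [cnt_split_one g0, cnt_split_one g0
    (p := fun g => G.tailO o g ∈ X ∧ G.headO o g ∉ X)]
  have h0 : ¬ ((loopify G g0).tailO o g0 ∈ X ∧ (loopify G g0).headO o g0 ∉ X) := by
    unfold Multigraph.tailO Multigraph.headO
    rw [(loopify_self G g0).1, (loopify_self G g0).2]
    rintro ⟨h1, h2⟩
    cases o g0 <;> simp_all
  rw [ite_eq_zero_of_not _ h0, Nat.zero_add]
  have hcongr : cnt (fun g => ((loopify G g0).tailO o g ∈ X ∧ (loopify G g0).headO o g ∉ X) ∧ g ≠ g0)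
      = cnt (fun g => (G.tailO o g ∈ X ∧ G.headO o g ∉ X) ∧ g ≠ g0) := by
    apply cnt_congr
    intro g
    by_cases h : g = g0
    · constructor
      · rintro ⟨_, hc⟩; exact absurd h hc
      · rintro ⟨_, hc⟩; exact absurd h hc
    · unfold Multigraph.tailO Multigraph.headO
      rw [(loopify_other G h).1, (loopify_other G h).2]
  rw [hcongr]
  omega

theorem tail_mem_of_Ins {A : Finset V} (hA : Ins G A) {g : E} (hnl : nl G g) (o : E → Bool) :
    G.tailO o g ∈ A ∧ G.headO o g ∈ A := by
  rcases hA g with ⟨h1, h2⟩ | hloop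
  · unfold Multigraph.tailO Multigraph.headO
    cases o g <;> simp_all
  · exact absurd hloop hnl

theorem tail_ne_head {g : E} (hnl : nl G g) (o : E → Bool) :
    G.tailO o g ≠ G.headO o g := by
  unfold Multigraph.tailO Multigraph.headO
  cases o g <;> simp_all [nl]
  exact fun hc => hnl hc.symm

theorem outC_erase_of_Ins {B : Finset V} (hB : Ins G B) {s : V} (hsB : s ∉ B)
    (o : E → Bool) (X : Finset V) :
    outC G o (X.erase s) = outC G o X := by
  unfold outC
  apply cnt_congr
  intro g
  by_cases hnl : nl G g
  · obtain ⟨ht, hh⟩ := tail_mem_of_Ins G hB hnl o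
    have ht2 : G.tailO o g ≠ s := fun hc => hsB (hc ▸ ht)
    have hh2 : G.headO o g ≠ s := fun hc => hsB (hc ▸ hh)
    rw [Finset.mem_erase, Finset.mem_erase]
    tauto
  · have : G.tailO o g = G.headO o g := by
      unfold Multigraph.tailO Multigraph.headO
      unfold nl at hnl
      push_neg at hnl
      cases o g <;> simp [hnl]
    rw [this]
    constructor
    · rintro ⟨h1, h2⟩; exact absurd h1 h2
    · rintro ⟨h1, h2⟩; exact absurd h1 h2

open Classical in
/-- Complete splitting at a vertex s of cut-degree 2n. -/
theorem CS {k : ℕ} (hk : 1 ≤ k) : ∀ (n : ℕ) (G : Multigraph V E) (A : Finset V) (s : V),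
    Ins G A → s ∈ A →
    (∀ X, validS (A.erase s) X → 2*k ≤ dC G X) →
    dC G {s} = 2*n →
    ∃ G2 : Multigraph V E,
      Ins G2 (A.erase s) ∧
      (∀ X, validS (A.erase s) X → 2*k ≤ dC G2 X) ∧
      ∀ o1 : E → Bool, ∃ o : E → Bool,
        (∀ X : Finset V, outC G2 o1 X ≤ outC G o X) ∧
        n ≤ cnt (fun g => nl G g ∧ G.headO o g = s) ∧
        n ≤ cnt (fun g => nl G g ∧ G.tailO o g = s) := by
  intro n
  induction n with
  | zero =>
    intro G A s hIns hsA HC hds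
    refine ⟨G, ?_, HC, fun o1 => ⟨o1, fun X => le_rfl, Nat.zero_le _, Nat.zero_le _⟩⟩
    intro g
    rcases hIns g with ⟨h1, h2⟩ | hloop
    · by_cases hnl : G.fst g = G.snd g
      · exact Or.inr hnl
      · left
        have hni : ¬ nlInc G s g := by
          intro hc
          have h := le_cnt (p := nlInc G s) {g} (fun x hx => by
            rw [Finset.mem_singleton] at hx
            subst hx
            exact hc)
          rw [← ds_eq_cnt_nlInc, hds] at h
          simpa using h
        unfold nlInc nl at hni
        push_neg at hni
        have := hni hnl
        rw [Finset.mem_erase, Finset.mem_erase]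
        exact ⟨⟨this.1, h1⟩, ⟨this.2, h2⟩⟩
    · exact Or.inr hloop
  | succ n ihn =>
    intro G A s hIns hsA HC hds
    have h1 : 1 ≤ cnt (nlInc G s) := by
      rw [← ds_eq_cnt_nlInc, hds]
      omega
    obtain ⟨e, he⟩ := cnt_pos (by omega : 0 < cnt (nlInc G s))
    obtain ⟨f, hfe, hf, hsplit⟩ := lovasz G hk hIns hsA HC ⟨n+1, by omega⟩ he
    have hef : e ≠ f := fun h => hfe h.symm
    set G1 := splitG G s e f with hG1
    have hIns1 : Ins G1 A := splitG_Ins G hIns hef he hf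
    have HC1 : ∀ X, validS (A.erase s) X → 2*k ≤ dC G1 X := by
      intro X hX
      have hsX : s ∉ X := validS_not_mem hX
      have hsd := splitG_dC G hef he hf hsX
      rw [← hG1] at hsd
      by_cases huv : G.other s e ∈ X ∧ G.other s f ∈ X
      · rw [if_pos huv] at hsd
        have := hsplit X hX huv.1 huv.2
        omega
      · rw [if_neg huv] at hsd
        have := HC X hX
        omega
    have hds1 : dC G1 {s} = 2*n := by
      have hds2 := splitG_ds G hef he hf
      rw [← hG1] at hds2
      omega
    obtain ⟨G2, hIns2, HC2, hlift⟩ := ihn G1 A s hIns1 hsA HC1 hds1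
    refine ⟨G2, hIns2, HC2, fun o1 => ?_⟩
    obtain ⟨o2, ho2a, ho2b, ho2c⟩ := hlift o1
    refine ⟨liftO G s e f o2, fun X => ?_, ?_, ?_⟩
    · have hle := split_outC_le G hef he hf o2 X
      rw [← hG1] at hle
      exact le_trans (ho2a X) hle
    · have hin := split_sIn G hef he hf o2
      rw [← hG1] at hin
      omega
    · have hout := split_sOut G hef he hf o2
      rw [← hG1] at hout
      omega

open Classical in
/-- Main induction: orientation with all cuts ≥ k. -/
theorem main {k : ℕ} (hk : 1 ≤ k) : ∀ (N : ℕ) (G : Multigraph V E) (A : Finset V),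
    A.card * (Fintype.card E + 1) + cnt (nl G) ≤ N →
    Ins G A →
    (∀ X, validS A X → 2*k ≤ dC G X) →
    ∃ o : E → Bool, ∀ X, validS A X → k ≤ outC G o X := by
  intro N
  induction N with
  | zero =>
    intro G A hm hIns HC
    refine ⟨fun _ => true, fun X hX => ?_⟩
    exfalso
    obtain ⟨x, hx⟩ := hX.2.1
    have hA0 : A.card = 0 := by
      by_contra hc
      have : 1 ≤ A.card := by omega
      nlinarith [hm]
    rw [Finset.card_eq_zero] at hA0
    subst hA0
    exact absurd (hX.1 hx) (Finset.notMem_empty x)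
  | succ N ih =>
    intro G A hm hIns HC
    by_cases hA2 : A.card ≤ 1
    · refine ⟨fun _ => true, fun X hX => ?_⟩
      exfalso
      obtain ⟨x, hx⟩ := hX.2.1
      obtain ⟨y, hy⟩ := hX.2.2
      rw [Finset.mem_sdiff] at hy
      have hxy : x ≠ y := fun h => hy.2 (h ▸ hx)
      have h2 : 1 < A.card := Finset.one_lt_card.2 ⟨x, hX.1 hx, y, hy.1, hxy⟩
      omega
    · push_neg at hA2
      by_cases hdel : ∃ g0, nl G g0 ∧ ∀ X, validS A X → 2*k ≤ dC (loopify G g0) X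
      · obtain ⟨g0, hg0, HC2⟩ := hdel
        have hm2 : A.card * (Fintype.card E + 1) + cnt (nl (loopify G g0)) ≤ N := by
          have h1 : cnt (nl (loopify G g0)) + 1 ≤ cnt (nl G) := by
            apply cnt_add_one_le g0 hg0 (loopify_not_nl G g0)
            intro g hg
            by_cases h : g = g0
            · subst h
              exact absurd hg (loopify_not_nl G g)
            · exact (loopify_nl G h).1 hg
          omega
        obtain ⟨o, ho⟩ := ih (loopify G g0) A hm2 (loopify_Ins G hIns g0) HC2
        refine ⟨o, fun X hX => ?_⟩
        exact le_trans (ho X hX) (loopify_outC_le G g0 o X)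
      · push_neg at hdel
        have htight : ∀ g0, nl G g0 → ∃ X, validS A X ∧ dC G X = 2*k ∧ crossP G X g0 := by
          intro g0 hg0
          obtain ⟨X, hXv, hXd⟩ := hdel g0 hg0
          have heq := loopify_dC G g0 X
          have hHC := HC X hXv
          by_cases hcr : crossP G X g0
          · rw [if_pos hcr] at heq
            exact ⟨X, hXv, by omega, hcr⟩
          · rw [if_neg hcr] at heq
            omega
        have hssingle : ∀ a, a ∈ A → validS A {a} := by
          intro a ha
          refine ⟨Finset.singleton_subset_iff.2 ha, ⟨a, Finset.mem_singleton_self a⟩, ?_⟩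
          obtain ⟨b, hbA, hba⟩ := Finset.exists_mem_ne hA2 a
          exact ⟨b, Finset.mem_sdiff.2 ⟨hbA, fun hc => hba (Finset.mem_singleton.1 hc)⟩⟩
        have hex : ∃ X, validS A X ∧ dC G X = 2*k := by
          obtain ⟨a, ha⟩ : A.Nonempty := Finset.card_pos.1 (by omega)
          have h2k := HC {a} (hssingle a ha)
          obtain ⟨g, hg⟩ := cnt_pos (show 0 < cnt (crossP G {a}) by
            unfold dC at h2k
            omega)
          have hnlg : nl G g := by
            rcases hg with ⟨h1, h2⟩ | ⟨h1, h2⟩ <;>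
              (rw [Finset.mem_singleton] at h1; intro hc)
            · rw [← hc] at h2; exact h2 (by rw [hc] at h1 ⊢; exact Finset.mem_singleton.2 h1)
            · rw [hc] at h2; exact h2 (Finset.mem_singleton.2 h1)
          obtain ⟨X, hXv, hXd, _⟩ := htight g hnlg
          exact ⟨X, hXv, hXd⟩
        -- minimal tight set
        obtain ⟨X0both, hX0S, hX0min⟩ : ∃ Y ∈ (A.powerset.filter
            (fun X => validS A X ∧ dC G X = 2*k)),
            ∀ Z ∈ (A.powerset.filter (fun X => validS A X ∧ dC G X = 2*k)),
              Y.card ≤ Z.card := by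
          apply Finset.exists_min_image
          obtain ⟨X, hXv, hXd⟩ := hex
          exact ⟨X, Finset.mem_filter.2 ⟨Finset.mem_powerset.2 hXv.1, hXv, hXd⟩⟩
        rw [Finset.mem_filter] at hX0S
        obtain ⟨_, hX0v, hX0d⟩ := hX0S
        set X0 := X0both with hX0def
        have hmin : ∀ Z, validS A Z → dC G Z = 2*k → X0.card ≤ Z.card := by
          intro Z h1 h2
          exact hX0min Z (Finset.mem_filter.2 ⟨Finset.mem_powerset.2 h1.1, h1, h2⟩)
        have hcard1 : X0.card = 1 := by
          by_contra hc
          have hge2 : 2 ≤ X0.card := by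
            have := Finset.card_pos.2 hX0v.2.1
            omega
          have hsum := I5 G X0
          have hins : 1 ≤ cnt (insideP G X0) := by
            have hv : ∀ v ∈ X0, 2*k ≤ dC G (({v} : Finset V)) := by
              intro v hv
              exact HC {v} (hssingle v (hX0v.1 hv))
            have hsle : X0.card * (2*k) ≤ ∑ v ∈ X0, dC G {v} := by
              calc X0.card * (2*k) = X0.card • (2*k) := by rw [smul_eq_mul]
                _ ≤ ∑ v ∈ X0, dC G {v} := Finset.card_nsmul_le_sum X0 _ _ hv
            have hmul : 2 * (2*k) ≤ X0.card * (2*k) := Nat.mul_le_mul_right _ hge2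
            omega
          obtain ⟨g, hgin⟩ := cnt_pos hins
          obtain ⟨Y, hYv, hYd, hYcr⟩ := htight g hgin.1
          have hfstX0 : G.fst g ∈ X0 := hgin.2.1
          have hsndX0 : G.snd g ∈ X0 := hgin.2.2
          have hIntNe : (X0 ∩ Y).Nonempty ∧ (X0 \ Y).Nonempty := by
            rcases hYcr with ⟨h1, h2⟩ | ⟨h1, h2⟩
            · exact ⟨⟨G.fst g, Finset.mem_inter.2 ⟨hfstX0, h1⟩⟩,
                ⟨G.snd g, Finset.mem_sdiff.2 ⟨hsndX0, h2⟩⟩⟩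
            · exact ⟨⟨G.snd g, Finset.mem_inter.2 ⟨hsndX0, h1⟩⟩,
                ⟨G.fst g, Finset.mem_sdiff.2 ⟨hfstX0, h2⟩⟩⟩
          by_cases hYsub : Y ⊆ X0
          · have hne : Y ≠ X0 := by
              intro hEq
              subst hEq
              rcases hYcr with ⟨h1, h2⟩ | ⟨h1, h2⟩
              · exact h2 hsndX0
              · exact h2 hfstX0
            have hss : Y ⊂ X0 := HasSubset.Subset.ssubset_of_ne hYsub hne
            have := hmin Y hYv hYd
            have := Finset.card_lt_card hss
            omega
          · by_cases hUcase : (A \ (X0 ∪ Y)).Nonempty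
            · have hvI : validS A (X0 ∩ Y) := by
                refine ⟨(Finset.inter_subset_left).trans hX0v.1, hIntNe.1, ?_⟩
                obtain ⟨y, hy⟩ := hX0v.2.2
                rw [Finset.mem_sdiff] at hy
                exact ⟨y, Finset.mem_sdiff.2 ⟨hy.1, fun hc => hy.2 (Finset.mem_inter.1 hc).1⟩⟩
              have hvU : validS A (X0 ∪ Y) := by
                refine ⟨Finset.union_subset hX0v.1 hYv.1,
                  ⟨G.fst g, Finset.mem_union_left _ hfstX0⟩, hUcase⟩
              have hI1 := I1 G X0 Y
              have hHCI := HC _ hvI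
              have hHCU := HC _ hvU
              have hIeq : dC G (X0 ∩ Y) = 2*k := by omega
              have hssI : X0 ∩ Y ⊂ X0 := by
                refine Finset.ssubset_iff_of_subset (Finset.inter_subset_left) |>.2 ?_
                obtain ⟨z, hz⟩ := hIntNe.2
                rw [Finset.mem_sdiff] at hz
                exact ⟨z, hz.1, fun hc => hz.2 (Finset.mem_inter.1 hc).2⟩
              have := hmin _ hvI hIeq
              have := Finset.card_lt_card hssI
              omega
            · have hvXY : validS A (X0 \ Y) := by
                refine ⟨(Finset.sdiff_subset).trans hX0v.1, hIntNe.2, ?_⟩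
                obtain ⟨y, hy⟩ := hYv.2.1
                exact ⟨y, Finset.mem_sdiff.2 ⟨hYv.1 hy, fun hc => (Finset.mem_sdiff.1 hc).2 hy⟩⟩
              have hvYX : validS A (Y \ X0) := by
                obtain ⟨z, hz1, hz2⟩ := Finset.not_subset.1 hYsub
                refine ⟨(Finset.sdiff_subset).trans hYv.1, ⟨z, Finset.mem_sdiff.2 ⟨hz1, hz2⟩⟩, ?_⟩
                obtain ⟨y, hy⟩ := hX0v.2.1
                exact ⟨y, Finset.mem_sdiff.2 ⟨hX0v.1 hy, fun hc => (Finset.mem_sdiff.1 hc).2 hy⟩⟩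
              have hI2 := I2 G X0 Y
              have hHCXY := HC _ hvXY
              have hHCYX := HC _ hvYX
              have hXYeq : dC G (X0 \ Y) = 2*k := by omega
              have hssI : X0 \ Y ⊂ X0 := by
                refine Finset.ssubset_iff_of_subset (Finset.sdiff_subset) |>.2 ?_
                obtain ⟨z, hz⟩ := hIntNe.1
                rw [Finset.mem_inter] at hz
                exact ⟨z, hz.1, fun hc => (Finset.mem_sdiff.1 hc).2 hz.2⟩
              have := hmin _ hvXY hXYeq
              have := Finset.card_lt_card hssI
              omega
        obtain ⟨s, hs⟩ := Finset.card_eq_one.1 hcard1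
        have hsA : s ∈ A := hX0v.1 (hs ▸ Finset.mem_singleton_self s)
        have hds : dC G {s} = 2*k := hs ▸ hX0d
        have HCs : ∀ X, validS (A.erase s) X → 2*k ≤ dC G X := by
          intro X hX
          apply HC X
          refine ⟨hX.1.trans (Finset.erase_subset s A), hX.2.1, ?_⟩
          exact ⟨s, Finset.mem_sdiff.2 ⟨hsA, validS_not_mem hX⟩⟩
        obtain ⟨G2, hIns2, HC2, hlift⟩ := CS hk k G A s hIns hsA HCs hds
        have hm2 : (A.erase s).card * (Fintype.card E + 1) + cnt (nl G2) ≤ N := by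
          have h1 : (A.erase s).card + 1 = A.card := Finset.card_erase_add_one hsA
          have h2 : cnt (nl G2) ≤ Fintype.card E := cnt_le_fincard _
          have h3 : A.card * (Fintype.card E + 1)
              = (A.erase s).card * (Fintype.card E + 1) + (Fintype.card E + 1) := by
            rw [← h1]
            ring
          omega
        obtain ⟨o1, ho1⟩ := ih G2 (A.erase s) hm2 hIns2 HC2
        obtain ⟨o, hoa, hob, hoc⟩ := hlift o1
        have hsnotAe : s ∉ A.erase s := Finset.notMem_erase s A
        refine ⟨o, fun X hX => ?_⟩
        by_cases hsX : s ∈ X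
        · by_cases hXe : (X.erase s).Nonempty
          · have hvE : validS (A.erase s) (X.erase s) := by
              refine ⟨Finset.erase_subset_erase s hX.1, hXe, ?_⟩
              obtain ⟨y, hy⟩ := hX.2.2
              rw [Finset.mem_sdiff] at hy
              have hys : y ≠ s := fun hc => hy.2 (hc ▸ hsX)
              exact ⟨y, Finset.mem_sdiff.2 ⟨Finset.mem_erase.2 ⟨hys, hy.1⟩,
                fun hc => hy.2 (Finset.mem_of_mem_erase hc)⟩⟩
            have h1 := ho1 (X.erase s) hvE
            have h2 := outC_erase_of_Ins G2 hIns2 hsnotAe o1 X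
            have h3 := hoa X
            omega
          · have hXs : X = {s} := by
              ext z
              rw [Finset.mem_singleton]
              constructor
              · intro hz
                by_contra hzs
                exact hXe ⟨z, Finset.mem_erase.2 ⟨hzs, hz⟩⟩
              · intro hz
                subst hz
                exact hsX
            have hsub : ∀ g, (nl G g ∧ G.tailO o g = s) → (G.tailO o g ∈ X ∧ G.headO o g ∉ X) := by
              rintro g ⟨hnl, ht⟩
              rw [hXs]
              constructor
              · rw [ht]; exact Finset.mem_singleton_self s
              · rw [Finset.mem_singleton]
                intro hc
                exact tail_ne_head G hnl o (ht.trans hc.symm)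
            exact le_trans hoc (cnt_mono hsub)
        · by_cases hAE : ((A.erase s) \ X).Nonempty
          · have hvX : validS (A.erase s) X := by
              refine ⟨?_, hX.2.1, hAE⟩
              intro x hx
              exact Finset.mem_erase.2 ⟨fun hc => hsX (hc ▸ hx), hX.1 hx⟩
            exact le_trans (ho1 X hvX) (hoa X)
          · have hsub2 : A.erase s ⊆ X := by
              rw [← Finset.sdiff_eq_empty_iff_subset]
              exact Finset.not_nonempty_iff_eq_empty.1 hAE
            have hsub : ∀ g, (nl G g ∧ G.headO o g = s) → (G.tailO o g ∈ X ∧ G.headO o g ∉ X) := by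
              rintro g ⟨hnl, hh⟩
              have htmem := (tail_mem_of_Ins G hIns hnl o).1
              have htne : G.tailO o g ≠ s := fun hc =>
                tail_ne_head G hnl o (hc.trans hh.symm)
              constructor
              · exact hsub2 (Finset.mem_erase.2 ⟨htne, htmem⟩)
              · rw [hh]; exact hsX
            exact le_trans hob (cnt_mono hsub)

end NWAux

open NW in
/-- Every finite 2k-edge-connected multigraph has a k-arc-connected orientation. -/

theorem stmt0 {V E : Type} [Finite V] [Finite E] (G : Multigraph V E) (k : ℕ)
    (hconn : G.EdgeConnected (2 * k)) :
    ∃ o : E → Bool, ∀ v w : V, v ≠ w → G.DiConnAtLeast o v w k := by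
  classical
  letI : Fintype V := Fintype.ofFinite V
  letI : Fintype E := Fintype.ofFinite E
  letI : DecidableEq V := Classical.decEq V
  letI : DecidableEq E := Classical.decEq E
  rcases Nat.eq_zero_or_pos k with rfl | hk
  · exact ⟨fun _ => true, fun v w hvw => ⟨fun i => i.elim0, fun i => i.elim0, fun i => i.elim0⟩⟩
  · have HC : ∀ X : Finset V, NWAux.validS Finset.univ X → 2*k ≤ NWAux.dC G X := by
      intro X hX
      obtain ⟨x, hx⟩ := hX.2.1
      have hne : (↑X : Set V).Nonempty := ⟨x, by simpa using hx⟩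
      have hcne : (↑X : Set V)ᶜ.Nonempty := by
        obtain ⟨y, hy⟩ := hX.2.2
        rw [Finset.mem_sdiff] at hy
        exact ⟨y, by simpa using hy.2⟩
      have h := hconn ↑X hne hcne
      have heq : (G.cut ↑X).ncard = NWAux.dC G X := by
        rw [Set.ncard_eq_toFinset_card']
        rw [NWAux.dC, NWAux.cnt]
        congr 1
        ext e
        rw [Set.mem_toFinset]
        simp only [Multigraph.cut, NWAux.crossP, Set.mem_toFinset, Set.mem_setOf_eq,
          Finset.mem_filter, Finset.mem_univ, true_and, Finset.mem_coe]
        tauto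
      rw [heq] at h
      exact h
    obtain ⟨o, ho⟩ := NWAux.main hk
      (Finset.univ.card * (Fintype.card E + 1) + NWAux.cnt (NWAux.nl G)) G Finset.univ le_rfl
      (fun e => Or.inl ⟨Finset.mem_univ _, Finset.mem_univ _⟩) HC
    refine ⟨o, fun v w hvw => ?_⟩
    apply NWAux.menger G o hvw k
    intro X hvX hwX
    exact ho X ⟨Finset.subset_univ X, ⟨v, hvX⟩, ⟨w, Finset.mem_sdiff.2 ⟨Finset.mem_univ w, hwX⟩⟩⟩
end

section
/- Let G be a finite multigraph, ℓ ≥ 4, A a proper vertex subset with λ_G(x,y) ≥ ℓ for all x, y ∈ A, every edge incident with a vertex of A, and s ∉ A not incident with a bridge. Suppose F1, F2 are independent sets in the lifting graph L(G,s,τ_A) of sizes r1, r2, with dangerous sets D1, D2 such that F_i = δ(s) ∩ δ(D_i), and let α = |F1 ∩ F2|. If α > 0, r1 > α, r2 > α, and the complement of D1 ∪ D2 ∪ {s} contains a vertex of A, then r1 + r2 ≤ ⌊deg(s)/2⌋ + 2. -/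
open NW NW.Multigraph


namespace NW.Multigraph
variable {V E : Type}

lemma cross_cut (G : Multigraph V E) (X : Set V) :
    ∀ (l : List (E × Bool)) (x y : V), G.IsWalk x y l → x ∈ X → y ∉ X →
      ∃ st ∈ l, st.1 ∈ G.cut X := by
  intro l
  induction l with
  | nil =>
    intro x y hw hx hy
    rcases hw.2 with ⟨_, rfl⟩ | ⟨s, t, hs, _⟩
    · exact absurd hx hy
    · simp at hs
  | cons s0 t ih =>
    intro x y hw hx hy
    obtain ⟨hc, hor⟩ := hw
    rcases hor with ⟨hnil, _⟩ | ⟨s', t', hh, hl, hsrc, hdst⟩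
    · simp at hnil
    · have hs' : s0 = s' := by simpa using hh
      subst hs'
      by_cases hd : G.dst s0 ∈ X
      · cases t with
        | nil =>
          obtain rfl : s0 = t' := by simpa using hl
          rw [hdst] at hd; exact absurd hd hy
        | cons s1 t2 =>
          simp only [List.Chain', List.isChain_cons_cons] at hc
          have hw2 : G.IsWalk (G.dst s0) y (s1 :: t2) := by
            refine ⟨hc.2, Or.inr ⟨s1, t', rfl, ?_, hc.1.symm, hdst⟩⟩
            rw [← hl]; simp [List.getLast?_cons_cons]
          obtain ⟨st, hst, hcut⟩ := ih (G.dst s0) y hw2 hd hy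
          exact ⟨st, List.mem_cons_of_mem _ hst, hcut⟩
      · refine ⟨s0, List.mem_cons_self, ?_⟩
        have hsx : G.src s0 ∈ X := hsrc ▸ hx
        obtain ⟨e0, b0⟩ := s0
        cases b0 <;> simp [Multigraph.src, Multigraph.dst] at hsx hd
        · exact Or.inr ⟨hd, hsx⟩
        · exact Or.inl ⟨hsx, hd⟩

lemma conn_cut [Finite E] (G : Multigraph V E) {x y : V} {m : ℕ}
    (h : G.ConnAtLeast x y m) {X : Set V} (hx : x ∈ X) (hy : y ∉ X) :
    m ≤ (G.cut X).ncard := by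
  obtain ⟨f, hf, hdisj⟩ := h
  choose st hst1 hst2 using fun i => cross_cut G X (f i) x y (hf i).1 hx hy
  have hg : Function.Injective (fun i => (⟨(st i).1, hst2 i⟩ : ↥(G.cut X))) := by
    intro i j hij
    by_contra hne
    have h1 : (st i).1 ∈ (f i).map Prod.fst := List.mem_map_of_mem (hst1 i)
    have h2 : (st j).1 ∈ (f j).map Prod.fst := List.mem_map_of_mem (hst1 j)
    have : (st i).1 = (st j).1 := congrArg Subtype.val hij
    exact hdisj i j hne h1 (this ▸ h2)
  calc m = Nat.card (Fin m) := by simp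
    _ ≤ Nat.card ↥(G.cut X) := Nat.card_le_card_of_injective _ hg
    _ = (G.cut X).ncard := Nat.card_coe_set_eq _

open Classical in
lemma ncard_eq_sum [Fintype E] (S : Set E) :
    S.ncard = ∑ e : E, if e ∈ S then 1 else 0 := by
  classical
  rw [Set.ncard_eq_toFinset_card' S]
  rw [show S.toFinset = Finset.univ.filter (· ∈ S) by ext e; simp]
  exact Finset.card_filter _ _

end NW.Multigraph


open NW in
/-- Upper bound on the sizes of two intersecting independent sets coming from dangerous sets. -/
theorem stmt4 {V E : Type} [Finite V] [Finite E] (G : Multigraph V E)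
    (ℓ : ℕ) (hl : 4 ≤ ℓ)
    (A : Set V) (hA : A ≠ Set.univ)
    (hconnA : ∀ x y, x ∈ A → y ∈ A → G.ConnAtLeast x y ℓ)
    (hedge : ∀ e, G.fst e ∈ A ∨ G.snd e ∈ A)
    (hloop : ∀ e, G.fst e ≠ G.snd e)
    (s : V) (hs : s ∉ A)
    (hbridge : ∀ e, G.Inc e s → ¬ G.IsBridge e)
    (F1 F2 : Set {e : E // G.Inc e s})
    (hI1 : Multigraph.IndepIn (G.LiftingGraph s (Multigraph.tauA A ℓ)) F1)
    (hI2 : Multigraph.IndepIn (G.LiftingGraph s (Multigraph.tauA A ℓ)) F2)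
    (D1 D2 : Set V)
    (hD1 : G.DangerousA A ℓ D1) (hD2 : G.DangerousA A ℓ D2)
    (hsD1 : s ∉ D1) (hsD2 : s ∉ D2)
    (hF1 : ∀ e : {e : E // G.Inc e s}, e ∈ F1 ↔ G.other s e.1 ∈ D1)
    (hF2 : ∀ e : {e : E // G.Inc e s}, e ∈ F2 ↔ G.other s e.1 ∈ D2)
    (hα : 0 < (F1 ∩ F2).ncard)
    (hr1 : (F1 ∩ F2).ncard < F1.ncard)
    (hr2 : (F1 ∩ F2).ncard < F2.ncard)
    (hout : ∃ a ∈ A, a ∉ D1 ∪ D2 ∪ {s}) :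
    F1.ncard + F2.ncard ≤ G.deg s / 2 + 2 := by
  classical
  haveI : Fintype E := Fintype.ofFinite E
  -- the four edge classes at s
  let SA : Set E := {e | G.Inc e s ∧ G.other s e ∈ D1 ∧ G.other s e ∈ D2}
  let SB : Set E := {e | G.Inc e s ∧ G.other s e ∈ D1 ∧ G.other s e ∉ D2}
  let SC : Set E := {e | G.Inc e s ∧ G.other s e ∉ D1 ∧ G.other s e ∈ D2}
  let SD : Set E := {e | G.Inc e s ∧ G.other s e ∉ D1 ∧ G.other s e ∉ D2}
  -- the other endpoint of an s-edge is in A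
  have hotherA : ∀ e : E, G.Inc e s → G.other s e ∈ A := by
    intro e he
    by_cases hf : G.fst e = s
    · rcases hedge e with h | h
      · rw [hf] at h; exact absurd h hs
      · simpa [Multigraph.other, hf] using h
    · have hsn : G.snd e = s := he.resolve_left hf
      rcases hedge e with h | h
      · simpa [Multigraph.other, hf] using h
      · rw [hsn] at h; exact absurd h hs
  -- images of F1, F2, F1 ∩ F2 in E
  have im1 : Subtype.val '' F1 = {e | G.Inc e s ∧ G.other s e ∈ D1} := by
    ext e
    constructor
    · rintro ⟨⟨e, he⟩, hmem, rfl⟩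
      exact ⟨he, (hF1 _).1 hmem⟩
    · rintro ⟨he, hD⟩
      exact ⟨⟨e, he⟩, (hF1 _).2 hD, rfl⟩
  have im2 : Subtype.val '' F2 = {e | G.Inc e s ∧ G.other s e ∈ D2} := by
    ext e
    constructor
    · rintro ⟨⟨e, he⟩, hmem, rfl⟩
      exact ⟨he, (hF2 _).1 hmem⟩
    · rintro ⟨he, hD⟩
      exact ⟨⟨e, he⟩, (hF2 _).2 hD, rfl⟩
  have im12 : Subtype.val '' (F1 ∩ F2) = SA := by
    ext e
    constructor
    · rintro ⟨⟨e, he⟩, ⟨hm1, hm2⟩, rfl⟩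
      exact ⟨he, (hF1 _).1 hm1, (hF2 _).1 hm2⟩
    · rintro ⟨he, h1, h2⟩
      exact ⟨⟨e, he⟩, ⟨(hF1 _).2 h1, (hF2 _).2 h2⟩, rfl⟩
  have hval : Function.Injective (Subtype.val : {e : E // G.Inc e s} → E) :=
    Subtype.val_injective
  -- cardinality identities
  have hr1' : F1.ncard = SA.ncard + SB.ncard := by
    rw [← Set.ncard_image_of_injective F1 hval, im1,
      Multigraph.ncard_eq_sum, Multigraph.ncard_eq_sum, Multigraph.ncard_eq_sum,
      ← Finset.sum_add_distrib]
    apply Finset.sum_congr rfl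
    intro e _
    by_cases h1 : G.other s e ∈ D1 <;> by_cases h2 : G.other s e ∈ D2 <;>
      by_cases h3 : G.Inc e s <;> simp [SA, SB, h1, h2, h3]
  have hr2' : F2.ncard = SA.ncard + SC.ncard := by
    rw [← Set.ncard_image_of_injective F2 hval, im2,
      Multigraph.ncard_eq_sum, Multigraph.ncard_eq_sum, Multigraph.ncard_eq_sum,
      ← Finset.sum_add_distrib]
    apply Finset.sum_congr rfl
    intro e _
    by_cases h1 : G.other s e ∈ D1 <;> by_cases h2 : G.other s e ∈ D2 <;>
      by_cases h3 : G.Inc e s <;> simp [SA, SC, h1, h2, h3]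
  have hα' : (F1 ∩ F2).ncard = SA.ncard := by
    rw [← Set.ncard_image_of_injective (F1 ∩ F2) hval, im12]
  -- degree of s
  have hdeg : G.deg s = SA.ncard + SB.ncard + SC.ncard + SD.ncard := by
    rw [Multigraph.deg, Multigraph.ncard_eq_sum, Multigraph.ncard_eq_sum,
      Multigraph.ncard_eq_sum, Multigraph.ncard_eq_sum, Multigraph.ncard_eq_sum,
      Multigraph.ncard_eq_sum, ← Finset.sum_add_distrib, ← Finset.sum_add_distrib,
      ← Finset.sum_add_distrib, ← Finset.sum_add_distrib]
    apply Finset.sum_congr rfl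
    intro e _
    have hne := hloop e
    simp only [Multigraph.Inc, Multigraph.other, Set.mem_setOf_eq, SA, SB, SC, SD]
    by_cases h3 : G.fst e = s
    · have h6 : G.snd e ≠ s := fun h => hne (h3.trans h.symm)
      by_cases h4 : G.snd e ∈ D1 <;> by_cases h5 : G.snd e ∈ D2 <;>
        simp [h3, h6, h4, h5] <;> omega
    · by_cases h6 : G.snd e = s
      · by_cases h1 : G.fst e ∈ D1 <;> by_cases h2 : G.fst e ∈ D2 <;>
          simp [h3, h6, h1, h2] <;> omega
      · simp [h3, h6]
  -- lower bounds on cuts separating A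
  have cutLB : ∀ X : Set V, (∃ x ∈ A, x ∈ X) → (∃ y ∈ A, y ∉ X) → ℓ ≤ (G.cut X).ncard := by
    rintro X ⟨x, hxA, hxX⟩ ⟨y, hyA, hyX⟩
    exact Multigraph.conn_cut G (hconnA x y hxA hyA) hxX hyX
  -- witnesses
  obtain ⟨a0, ha0A, ha0⟩ := hout
  have ha0n1 : a0 ∉ D1 := fun h => ha0 (Or.inl (Or.inl h))
  have ha0n2 : a0 ∉ D2 := fun h => ha0 (Or.inl (Or.inr h))
  have hne0 : (F1 ∩ F2).ncard ≠ 0 := by omega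
  obtain ⟨ew, hew⟩ : (F1 ∩ F2).Nonempty := Set.nonempty_of_ncard_ne_zero hne0
  have hx0 : ∃ x0 ∈ A, x0 ∈ D1 ∩ D2 :=
    ⟨G.other s ew.1, hotherA ew.1 ew.2, (hF1 _).1 hew.1, (hF2 _).1 hew.2⟩
  have hx1 : ∃ x1 ∈ A, x1 ∈ D1 \ D2 := by
    have : ¬ F1 ⊆ F1 ∩ F2 := by
      intro hsub
      exact absurd (Set.ncard_le_ncard hsub (Set.toFinite _)) (not_le.2 hr1)
    obtain ⟨e, he1, he2⟩ := Set.not_subset.1 this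
    refine ⟨G.other s e.1, hotherA e.1 e.2, (hF1 _).1 he1, fun h => he2 ⟨he1, (hF2 _).2 h⟩⟩
  have hx2 : ∃ x2 ∈ A, x2 ∈ D2 \ D1 := by
    have : ¬ F2 ⊆ F1 ∩ F2 := by
      intro hsub
      exact absurd (Set.ncard_le_ncard hsub (Set.toFinite _)) (not_le.2 hr2)
    obtain ⟨e, he1, he2⟩ := Set.not_subset.1 this
    refine ⟨G.other s e.1, hotherA e.1 e.2, (hF2 _).1 he1, fun h => he2 ⟨(hF1 _).2 h, he1⟩⟩
  have lb0 : ℓ ≤ (G.cut (D1 ∩ D2)).ncard := by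
    obtain ⟨x0, hA0, hx0⟩ := hx0
    exact cutLB _ ⟨x0, hA0, hx0⟩ ⟨a0, ha0A, fun h => ha0n1 h.1⟩
  have lb1 : ℓ ≤ (G.cut (D1 \ D2)).ncard := by
    obtain ⟨x1, hA1, hx1⟩ := hx1
    exact cutLB _ ⟨x1, hA1, hx1⟩ ⟨a0, ha0A, fun h => ha0n1 h.1⟩
  have lb2 : ℓ ≤ (G.cut (D2 \ D1)).ncard := by
    obtain ⟨x2, hA2, hx2⟩ := hx2
    exact cutLB _ ⟨x2, hA2, hx2⟩ ⟨a0, ha0A, fun h => ha0n2 h.1⟩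
  have lbW : ℓ ≤ (G.cut (D1 ∪ D2 ∪ {s})).ncard := by
    obtain ⟨x0, hA0, hx0⟩ := hx0
    exact cutLB _ ⟨x0, hA0, Or.inl (Or.inl hx0.1)⟩ ⟨a0, ha0A, ha0⟩
  -- submodularity-style counting claims
  have claimA : (G.cut (D1 ∩ D2)).ncard + (G.cut (D1 ∪ D2 ∪ {s})).ncard
      + SA.ncard + SB.ncard + SC.ncard
      ≤ (G.cut D1).ncard + (G.cut D2).ncard + SD.ncard := by
    rw [Multigraph.ncard_eq_sum, Multigraph.ncard_eq_sum, Multigraph.ncard_eq_sum,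
      Multigraph.ncard_eq_sum, Multigraph.ncard_eq_sum, Multigraph.ncard_eq_sum,
      Multigraph.ncard_eq_sum, Multigraph.ncard_eq_sum,
      ← Finset.sum_add_distrib, ← Finset.sum_add_distrib, ← Finset.sum_add_distrib,
      ← Finset.sum_add_distrib, ← Finset.sum_add_distrib, ← Finset.sum_add_distrib]
    apply Finset.sum_le_sum
    intro e _
    have hne := hloop e
    simp only [Multigraph.cut, Multigraph.Inc, Multigraph.other, Set.mem_setOf_eq,
      Set.mem_inter_iff, Set.mem_union, Set.mem_diff, Set.mem_singleton_iff, SA, SB, SC, SD]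
    by_cases h3 : G.fst e = s
    · have h6 : G.snd e ≠ s := fun h => hne (h3.trans h.symm)
      by_cases h4 : G.snd e ∈ D1 <;> by_cases h5 : G.snd e ∈ D2 <;>
        simp [h3, h6, h4, h5, hsD1, hsD2] <;> omega
    · by_cases h6 : G.snd e = s
      · by_cases h1 : G.fst e ∈ D1 <;> by_cases h2 : G.fst e ∈ D2 <;>
          simp [h3, h6, h1, h2, hsD1, hsD2] <;> omega
      · by_cases h1 : G.fst e ∈ D1 <;> by_cases h2 : G.fst e ∈ D2 <;>
          by_cases h4 : G.snd e ∈ D1 <;> by_cases h5 : G.snd e ∈ D2 <;>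
          simp [h3, h6, h1, h2, h4, h5] <;> omega
  have claimB : (G.cut (D1 \ D2)).ncard + (G.cut (D2 \ D1)).ncard + 2 * SA.ncard
      ≤ (G.cut D1).ncard + (G.cut D2).ncard := by
    have h2a : 2 * SA.ncard = SA.ncard + SA.ncard := by ring
    rw [h2a, Multigraph.ncard_eq_sum, Multigraph.ncard_eq_sum, Multigraph.ncard_eq_sum,
      Multigraph.ncard_eq_sum, Multigraph.ncard_eq_sum,
      ← Finset.sum_add_distrib, ← Finset.sum_add_distrib, ← Finset.sum_add_distrib,
      ← Finset.sum_add_distrib]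
    apply Finset.sum_le_sum
    intro e _
    have hne := hloop e
    simp only [Multigraph.cut, Multigraph.Inc, Multigraph.other, Set.mem_setOf_eq,
      Set.mem_inter_iff, Set.mem_union, Set.mem_diff, Set.mem_singleton_iff, SA, SB, SC, SD]
    by_cases h3 : G.fst e = s
    · have h6 : G.snd e ≠ s := fun h => hne (h3.trans h.symm)
      by_cases h4 : G.snd e ∈ D1 <;> by_cases h5 : G.snd e ∈ D2 <;>
        simp [h3, h6, h4, h5, hsD1, hsD2] <;> omega
    · by_cases h6 : G.snd e = s
      · by_cases h1 : G.fst e ∈ D1 <;> by_cases h2 : G.fst e ∈ D2 <;>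
          simp [h3, h6, h1, h2, hsD1, hsD2] <;> omega
      · by_cases h1 : G.fst e ∈ D1 <;> by_cases h2 : G.fst e ∈ D2 <;>
          by_cases h4 : G.snd e ∈ D1 <;> by_cases h5 : G.snd e ∈ D2 <;>
          simp [h3, h6, h1, h2, h4, h5] <;> omega
  have hD1c : (G.cut D1).ncard ≤ ℓ + 1 := hD1.2.2
  have hD2c : (G.cut D2).ncard ≤ ℓ + 1 := hD2.2.2
  rw [hr1', hr2', hdeg]
  rw [hα'] at hα
  omega
end

section
/- With deg(s) = 4 and s not incident with a bridge, if a pair of edges at s is τ_A-admissible, then so is the complementary pair of the other two edges at s; consequently the lifting graph L(G,s,τ_A) is a union of perfect matchings on its four vertices. -/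
open NW NW.Multigraph

namespace LiftAux

variable {V E : Type}

lemma isWalk_nil_iff (G : Multigraph V E) (x y : V) : G.IsWalk x y [] ↔ x = y := by
  simp [Multigraph.IsWalk, List.Chain', List.isChain_nil]

lemma isWalk_cons (G : Multigraph V E) (x y : V) (a : E × Bool) (l : List (E × Bool)) :
    G.IsWalk x y (a :: l) ↔ G.src a = x ∧ G.IsWalk (G.dst a) y l := by
  rcases l with _ | ⟨b, l⟩
  · constructor
    · rintro ⟨-, h⟩
      rcases h with ⟨h, -⟩ | ⟨s', t', hs', ht', hx, hy⟩
      · cases h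
      · simp only [List.head?_cons, Option.some.injEq] at hs'
        simp only [List.getLast?_singleton, Option.some.injEq] at ht'
        subst hs'; subst ht'
        exact ⟨hx, by simp [Multigraph.IsWalk, hy, List.Chain', List.isChain_nil]⟩
    · rintro ⟨hx, hw⟩
      rw [isWalk_nil_iff] at hw
      exact ⟨List.isChain_singleton a, Or.inr ⟨a, a, rfl, rfl, hx, hw⟩⟩
  · constructor
    · rintro ⟨hc, h⟩
      rcases h with ⟨h, -⟩ | ⟨s', t', hs', ht', hx, hy⟩
      · cases h
      · simp only [List.head?_cons, Option.some.injEq] at hs'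
        subst hs'
        simp only [List.Chain', List.isChain_cons_cons] at hc
        rw [List.getLast?_cons_cons] at ht'
        exact ⟨hx, hc.2, Or.inr ⟨b, t', rfl, ht', hc.1.symm, hy⟩⟩
    · rintro ⟨hx, hc, h⟩
      rcases h with ⟨h, -⟩ | ⟨s', t', hs', ht', hx', hy⟩
      · cases h
      · simp only [List.head?_cons, Option.some.injEq] at hs'
        subst hs'
        refine ⟨List.isChain_cons_cons.2 ⟨hx'.symm, hc⟩,
          Or.inr ⟨a, t', rfl, ?_, hx, hy⟩⟩
        rw [List.getLast?_cons_cons]; exact ht'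

lemma other_ne (G : Multigraph V E) (s : V) (e : E) (hinc : G.Inc e s)
    (hl : G.fst e ≠ G.snd e) : G.other s e ≠ s := by
  unfold Multigraph.other
  by_cases hf : G.fst e = s
  · simp only [hf, if_pos rfl]  -- other = snd e
    intro h2; exact hl (hf.trans h2.symm)
  · rw [if_neg hf]; exact hf

lemma src_dst_of_ne_s (G : Multigraph V E) (s : V) (e : E) (hinc : G.Inc e s)
    (hl : G.fst e ≠ G.snd e) (b : Bool) (hsrc : G.src (e, b) ≠ s) :
    G.src (e, b) = G.other s e ∧ G.dst (e, b) = s := by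
  cases b <;>
    simp only [Multigraph.src, Multigraph.dst, Multigraph.other, if_true, if_false,
      Bool.false_eq_true, ite_true, ite_false] at *
  · rcases hinc with h | h
    · rw [if_pos h]; exact ⟨rfl, h⟩
    · exact absurd h hsrc
  · rcases hinc with h | h
    · exact absurd h hsrc
    · rw [if_neg (fun hf => hl (hf.trans h.symm))]; exact ⟨rfl, h⟩

lemma src_dst_of_src_s (G : Multigraph V E) (s : V) (e : E) (hinc : G.Inc e s)
    (hl : G.fst e ≠ G.snd e) (b : Bool) (hsrc : G.src (e, b) = s) :
    G.dst (e, b) = G.other s e := by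
  cases b <;>
    simp only [Multigraph.src, Multigraph.dst, Multigraph.other, if_true, if_false,
      Bool.false_eq_true, ite_true, ite_false] at *
  · rw [if_neg (fun hf => hl (hf.trans hsrc.symm))]
  · rw [if_pos hsrc]

lemma not_inc_src_dst (G : Multigraph V E) (s : V) (e : E) (h : ¬ G.Inc e s) (b : Bool) :
    G.src (e, b) ≠ s ∧ G.dst (e, b) ≠ s := by
  cases b <;>
    simp only [Multigraph.src, Multigraph.dst, if_true, if_false, Bool.false_eq_true,
      ite_true, ite_false] <;>
    first | exact ⟨fun hh => h (Or.inr hh), fun hh => h (Or.inl hh)⟩ | exact ⟨fun hh => h (Or.inl hh), fun hh => h (Or.inr hh)⟩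


lemma lift_fst_ne (G : Multigraph V E) (s : V) (e1 e2 : E) (e : E) (h : e ≠ e2)
    (hne : e ≠ e1) : (G.lift s e1 e2).fst ⟨e, h⟩ = G.fst e := by
  simp [Multigraph.lift, hne]

lemma lift_snd_ne (G : Multigraph V E) (s : V) (e1 e2 : E) (e : E) (h : e ≠ e2)
    (hne : e ≠ e1) : (G.lift s e1 e2).snd ⟨e, h⟩ = G.snd e := by
  simp [Multigraph.lift, hne]

lemma lift_fst_self (G : Multigraph V E) (s : V) (e1 e2 : E) (h : e1 ≠ e2) :
    (G.lift s e1 e2).fst ⟨e1, h⟩ = G.other s e1 := by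
  simp [Multigraph.lift]

lemma lift_snd_self (G : Multigraph V E) (s : V) (e1 e2 : E) (h : e1 ≠ e2) :
    (G.lift s e1 e2).snd ⟨e1, h⟩ = G.other s e2 := by
  simp [Multigraph.lift]

lemma lift_src_ne (G : Multigraph V E) (s : V) (e1 e2 : E) (e : E) (h : e ≠ e2)
    (hne : e ≠ e1) (b : Bool) :
    (G.lift s e1 e2).src (⟨e, h⟩, b) = G.src (e, b) := by
  cases b <;> simp only [Multigraph.src] <;>
    simp [lift_fst_ne G s e1 e2 e h hne, lift_snd_ne G s e1 e2 e h hne]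

lemma lift_dst_ne (G : Multigraph V E) (s : V) (e1 e2 : E) (e : E) (h : e ≠ e2)
    (hne : e ≠ e1) (b : Bool) :
    (G.lift s e1 e2).dst (⟨e, h⟩, b) = G.dst (e, b) := by
  cases b <;> simp only [Multigraph.dst] <;>
    simp [lift_fst_ne G s e1 e2 e h hne, lift_snd_ne G s e1 e2 e h hne]

section Conv

variable (G : Multigraph V E) (s : V) (p q r t : E)

open Classical in
/-- Orientation of `e` pointing towards `s`. -/
noncomputable def twd (e : E) : Bool := if G.snd e = s then true else false

lemma twd_spec (e : E) (hinc : G.Inc e s) (hl : G.fst e ≠ G.snd e) :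
    G.src (e, twd G s e) = G.other s e ∧ G.dst (e, twd G s e) = s := by
  classical
  unfold twd
  by_cases h : G.snd e = s
  · simp only [if_pos h, Multigraph.src, Multigraph.dst, Multigraph.other, ite_true]
    rw [if_neg (fun hf => hl (hf.trans h.symm))]
    exact ⟨rfl, h⟩
  · have hf : G.fst e = s := hinc.resolve_right h
    simp only [if_neg h, Multigraph.src, Multigraph.dst, Multigraph.other,
      Bool.false_eq_true, ite_false]
    rw [if_pos hf]
    exact ⟨rfl, hf⟩

lemma twd_spec' (e : E) (hinc : G.Inc e s) (hl : G.fst e ≠ G.snd e) :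
    G.src (e, !twd G s e) = s ∧ G.dst (e, !twd G s e) = G.other s e := by
  classical
  unfold twd
  by_cases h : G.snd e = s
  · simp only [if_pos h, Multigraph.src, Multigraph.dst, Multigraph.other,
      Bool.not_true, Bool.false_eq_true, ite_false]
    rw [if_neg (fun hf => hl (hf.trans h.symm))]
    exact ⟨h, rfl⟩
  · have hf : G.fst e = s := hinc.resolve_right h
    simp only [if_neg h, Multigraph.src, Multigraph.dst, Multigraph.other,
      Bool.not_false, ite_true]
    rw [if_pos hf]
    exact ⟨hf, rfl⟩

open Classical in
/-- Convert a trail of `G.lift s p q` into a trail of `G.lift s r t`. -/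
noncomputable def conv (hpt : p ≠ t) (hqt : q ≠ t) (hrt : r ≠ t) :
    List ({e : E // e ≠ q} × Bool) → List ({e : E // e ≠ t} × Bool)
  | [] => []
  | st :: rest =>
    if _hp : st.1.1 = p then
      (if st.2 then [(⟨p, hpt⟩, twd G s p), (⟨q, hqt⟩, !twd G s q)]
       else [(⟨q, hqt⟩, twd G s q), (⟨p, hpt⟩, !twd G s p)]) ++ conv hpt hqt hrt rest
    else if hrt2 : st.1.1 = r ∨ st.1.1 = t then
      match rest with
      | [] => []
      | _ :: rest2 => (⟨r, hrt⟩, if st.1.1 = r then true else false) :: conv hpt hqt hrt rest2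
    else (⟨st.1.1, fun hh => hrt2 (Or.inr hh)⟩, st.2) :: conv hpt hqt hrt rest

open Classical in
/-- Edge translation. -/
noncomputable def fE (e : E) : List E := if e = p then [p, q] else if e = t then [] else [e]


lemma conv_nil (hpt : p ≠ t) (hqt : q ≠ t) (hrt : r ≠ t) :
    conv G s p q r t hpt hqt hrt [] = [] := by rw [conv]

lemma conv_cons_p (hpt : p ≠ t) (hqt : q ≠ t) (hrt : r ≠ t) (st : {e : E // e ≠ q} × Bool)
    (rest) (hp : st.1.1 = p) :
    conv G s p q r t hpt hqt hrt (st :: rest) =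
      (if st.2 then [(⟨p, hpt⟩, twd G s p), (⟨q, hqt⟩, !twd G s q)]
       else [(⟨q, hqt⟩, twd G s q), (⟨p, hpt⟩, !twd G s p)]) ++
        conv G s p q r t hpt hqt hrt rest := by
  rw [conv.eq_def]
  simp only [hp, dif_pos]

open Classical in
lemma conv_cons_rt (hpt : p ≠ t) (hqt : q ≠ t) (hrt : r ≠ t)
    (st st2 : {e : E // e ≠ q} × Bool) (rest2) (hp : ¬ st.1.1 = p)
    (h2 : st.1.1 = r ∨ st.1.1 = t) :
    conv G s p q r t hpt hqt hrt (st :: st2 :: rest2) =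
      (⟨r, hrt⟩, if st.1.1 = r then true else false) ::
        conv G s p q r t hpt hqt hrt rest2 := by
  rw [conv.eq_def]
  simp only [hp, h2, dif_neg, dif_pos, not_false_iff]

lemma conv_cons_other (hpt : p ≠ t) (hqt : q ≠ t) (hrt : r ≠ t)
    (st : {e : E // e ≠ q} × Bool) (rest) (hp : ¬ st.1.1 = p)
    (h2 : ¬ (st.1.1 = r ∨ st.1.1 = t)) :
    conv G s p q r t hpt hqt hrt (st :: rest) =
      (⟨st.1.1, fun hh => h2 (Or.inr hh)⟩, st.2) ::
        conv G s p q r t hpt hqt hrt rest := by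
  rw [conv.eq_def]
  simp only [hp, h2, dif_neg, not_false_iff]

end Conv


lemma bind_cons' {α β : Type*} (a : α) (l : List α) (f : α → List β) :
    (a :: l).flatMap f = f a ++ l.flatMap f := rfl

section ConvSpec

variable {G : Multigraph V E} {s : V} {p q r t : E}

lemma conv_spec
    (hloop : ∀ e, G.fst e ≠ G.snd e)
    (hps : G.Inc p s) (hqs : G.Inc q s) (hrs : G.Inc r s) (hts : G.Inc t s)
    (hpq : p ≠ q) (hpr : p ≠ r) (hpt : p ≠ t) (hqr : q ≠ r) (hqt : q ≠ t) (hrt : r ≠ t)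
    (hall : ∀ e, G.Inc e s → e = p ∨ e = q ∨ e = r ∨ e = t)
    (y : V) (hy : y ≠ s) :
    ∀ (n : ℕ) (l : List ({e : E // e ≠ q} × Bool)), l.length ≤ n → ∀ x, x ≠ s →
      (G.lift s p q).IsWalk x y l → ((l.map fun st => st.1.1).Nodup) →
      (G.lift s r t).IsWalk x y (conv G s p q r t hpt hqt hrt l) ∧
      ((conv G s p q r t hpt hqt hrt l).map fun st => st.1.1).Perm
        ((l.map fun st => st.1.1).flatMap (fE p q t)) := by
  intro n
  induction n with
  | zero =>
    intro l hlen x hx hw hnd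
    have hl0 : l = [] := List.length_eq_zero_iff.mp (Nat.le_zero.mp hlen)
    subst hl0
    rw [isWalk_nil_iff] at hw
    exact ⟨by rw [conv_nil, isWalk_nil_iff]; exact hw, by rw [conv_nil]; simp⟩
  | succ n ih =>
    intro l hlen x hx hw hnd
    rcases l with _ | ⟨⟨⟨e, heq⟩, b⟩, rest⟩
    · rw [isWalk_nil_iff] at hw
      exact ⟨by rw [conv_nil, isWalk_nil_iff]; exact hw, by rw [conv_nil]; simp⟩
    · rw [isWalk_cons] at hw
      obtain ⟨hsrc, hw'⟩ := hw
      simp only [List.map_cons, List.nodup_cons, List.mem_map] at hnd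
      by_cases hp : e = p
      · -- the step traverses the new edge of `lift p q`
        subst hp
        rw [conv_cons_p G s e q r t hpt hqt hrt _ rest rfl]
        have hfst : (G.lift s e q).fst ⟨e, heq⟩ = G.other s e := lift_fst_self G s e q heq
        have hsnd : (G.lift s e q).snd ⟨e, heq⟩ = G.other s q := lift_snd_self G s e q heq
        have haqs : G.other s q ≠ s := other_ne G s q hqs (hloop q)
        have haps : G.other s e ≠ s := other_ne G s e hps (hloop e)
        cases b
        · -- b = false : from other s q to other s e
          have hx' : G.other s q = x := by
            simpa [Multigraph.src, hsnd] using hsrc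
          have hdst : (G.lift s e q).dst (⟨e, heq⟩, false) = G.other s e := by
            simp [Multigraph.dst, hfst]
          rw [hdst] at hw'
          obtain ⟨ihw, ihp⟩ := ih rest (by simpa using Nat.le_of_succ_le_succ hlen)
            (G.other s e) haps hw' hnd.2
          constructor
          · rw [if_neg (by simp)]
            rw [List.cons_append, List.cons_append, List.nil_append]
            rw [isWalk_cons, isWalk_cons]
            have h1 := twd_spec G s q hqs (hloop q)
            have h2 := twd_spec' G s e hps (hloop e)
            refine ⟨?_, ?_, ?_⟩
            · rw [lift_src_ne G s r t q hqt hqr, h1.1, hx']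
            · rw [lift_dst_ne G s r t q hqt hqr, h1.2,
                lift_src_ne G s r t e hpt hpr, h2.1]
            · rw [lift_dst_ne G s r t e hpt hpr, h2.2]
              exact ihw
          · rw [if_neg (by simp)]
            simp only [List.map_append, List.map_cons, List.map_nil, bind_cons']
            have hfe : fE e q t e = [e, q] := by rw [fE, if_pos rfl]
            rw [hfe]
            exact List.Perm.append (List.Perm.swap e q []) ihp
        · -- b = true : from other s e to other s q
          have hx' : G.other s e = x := by
            simpa [Multigraph.src, hfst] using hsrc
          have hdst : (G.lift s e q).dst (⟨e, heq⟩, true) = G.other s q := by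
            simp [Multigraph.dst, hsnd]
          rw [hdst] at hw'
          obtain ⟨ihw, ihp⟩ := ih rest (by simpa using Nat.le_of_succ_le_succ hlen)
            (G.other s q) haqs hw' hnd.2
          constructor
          · rw [if_pos rfl]
            rw [List.cons_append, List.cons_append, List.nil_append]
            rw [isWalk_cons, isWalk_cons]
            have h1 := twd_spec G s e hps (hloop e)
            have h2 := twd_spec' G s q hqs (hloop q)
            refine ⟨?_, ?_, ?_⟩
            · rw [lift_src_ne G s r t e hpt hpr, h1.1, hx']
            · rw [lift_dst_ne G s r t e hpt hpr, h1.2,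
                lift_src_ne G s r t q hqt hqr, h2.1]
            · rw [lift_dst_ne G s r t q hqt hqr, h2.2]
              exact ihw
          · rw [if_pos rfl]
            simp only [List.map_append, List.map_cons, List.map_nil, bind_cons']
            have hfe : fE e q t e = [e, q] := by rw [fE, if_pos rfl]
            rw [hfe]
            exact List.Perm.append (List.Perm.refl _) ihp
      · by_cases hert : e = r ∨ e = t
        · -- passage through s
          have hinc : G.Inc e s := by rcases hert with h | h <;> subst h <;> assumption
          have hsx : G.src (e, b) = x := by
            rw [← lift_src_ne G s p q e heq hp b]; exact hsrc
          have hse := src_dst_of_ne_s G s e hinc (hloop e) b (by rw [hsx]; exact hx)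
          have hdst : (G.lift s p q).dst (⟨e, heq⟩, b) = s := by
            rw [lift_dst_ne G s p q e heq hp b]; exact hse.2
          rw [hdst] at hw'
          rcases rest with _ | ⟨⟨⟨e2, he2q⟩, b2⟩, rest2⟩
          · rw [isWalk_nil_iff] at hw'
            exact absurd hw'.symm hy
          · rw [isWalk_cons] at hw'
            obtain ⟨hsrc2, hw''⟩ := hw'
            have he2p : e2 ≠ p := by
              intro h
              subst h
              have h1 : (G.lift s e2 q).src (⟨e2, he2q⟩, b2) ≠ s := by
                cases b2
                · simp only [Multigraph.src, Bool.false_eq_true, ite_false,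
                    lift_snd_self G s e2 q he2q]
                  exact other_ne G s q hqs (hloop q)
                · simp only [Multigraph.src, ite_true, lift_fst_self G s e2 q he2q]
                  exact other_ne G s e2 hps (hloop e2)
              exact h1 hsrc2
            have hs2 : G.src (e2, b2) = s := by
              rw [← lift_src_ne G s p q e2 he2q he2p b2]; exact hsrc2
            have hinc2 : G.Inc e2 s := by
              cases b2
              · exact Or.inr (by simpa [Multigraph.src] using hs2)
              · exact Or.inl (by simpa [Multigraph.src] using hs2)
            have he2rt : e2 = r ∨ e2 = t := by
              rcases hall e2 hinc2 with h | h | h | h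
              · exact absurd h he2p
              · exact absurd h he2q
              · exact Or.inl h
              · exact Or.inr h
            have hee2 : e ≠ e2 := by
              intro h
              exact hnd.1 ⟨(⟨e2, he2q⟩, b2), List.mem_cons_self, h.symm⟩
            have hdst2 : (G.lift s p q).dst (⟨e2, he2q⟩, b2) = G.other s e2 := by
              rw [lift_dst_ne G s p q e2 he2q he2p b2]
              exact src_dst_of_src_s G s e2 hinc2 (hloop e2) b2 hs2
            rw [hdst2] at hw''
            have hx2s : G.other s e2 ≠ s := other_ne G s e2 hinc2 (hloop e2)
            have hnd2 : (rest2.map fun st => st.1.1).Nodup := by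
              have h2 := hnd.2
              rw [List.map_cons, List.nodup_cons] at h2
              exact h2.2
            obtain ⟨ihw, ihp⟩ := ih rest2
              (by simp only [List.length_cons] at hlen ⊢; omega)
              (G.other s e2) hx2s hw'' hnd2
            rw [conv_cons_rt G s p q r t hpt hqt hrt _ _ rest2 hp hert]
            have hxo : G.other s e = x := by rw [← hse.1, hsx]
            constructor
            · rw [isWalk_cons]
              have hfr : (G.lift s r t).fst ⟨r, hrt⟩ = G.other s r := lift_fst_self G s r t hrt
              have hsr : (G.lift s r t).snd ⟨r, hrt⟩ = G.other s t := lift_snd_self G s r t hrt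
              rcases hert with he' | he'
              · -- e = r, so e2 = t
                have he2' : e2 = t := by
                  rcases he2rt with h | h
                  · exact absurd (he'.trans h.symm) hee2
                  · exact h
                rw [if_pos he']
                rw [he'] at hxo
                rw [he2'] at ihw
                constructor
                · simp only [Multigraph.src, ite_true, hfr]
                  exact hxo
                · simp only [Multigraph.dst, ite_true, hsr]
                  exact ihw
              · -- e = t, so e2 = r
                have he2' : e2 = r := by
                  rcases he2rt with h | h
                  · exact h
                  · exact absurd (he'.trans h.symm) hee2
                rw [if_neg (fun h : e = r => hrt (h.symm.trans he'))]
                rw [he'] at hxo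
                rw [he2'] at ihw
                constructor
                · simp only [Multigraph.src, Bool.false_eq_true, ite_false, hsr]
                  exact hxo
                · simp only [Multigraph.dst, Bool.false_eq_true, ite_false, hfr]
                  exact ihw
            · simp only [List.map_cons, bind_cons']
              have hfr' : fE p q t r = [r] := by
                rw [fE, if_neg (fun h => hpr h.symm), if_neg hrt]
              have hft' : fE p q t t = [] := by
                rw [fE, if_neg (fun h => hpt h.symm), if_pos rfl]
              rcases hert with he' | he'
              · have he2' : e2 = t := by
                  rcases he2rt with h | h
                  · exact absurd (he'.trans h.symm) hee2
                  · exact h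
                rw [he', he2', hfr', hft']
                simpa using ihp.cons r
              · have he2' : e2 = r := by
                  rcases he2rt with h | h
                  · exact h
                  · exact absurd (he'.trans h.symm) hee2
                rw [he', he2', hft', hfr']
                simpa using ihp.cons r
        · -- an ordinary edge, not incident with s
          have hein : ¬ G.Inc e s := by
            intro h
            rcases hall e h with h' | h' | h' | h'
            · exact hp h'
            · exact heq h'
            · exact hert (Or.inl h')
            · exact hert (Or.inr h')
          have her : e ≠ r := fun h => hert (Or.inl h)
          have het : e ≠ t := fun h => hert (Or.inr h)
          have hdst : (G.lift s p q).dst (⟨e, heq⟩, b) = G.dst (e, b) :=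
            lift_dst_ne G s p q e heq hp b
          rw [hdst] at hw'
          have hd2 : G.dst (e, b) ≠ s := (not_inc_src_dst G s e hein b).2
          obtain ⟨ihw, ihp⟩ := ih rest (by simpa using Nat.le_of_succ_le_succ hlen)
            (G.dst (e, b)) hd2 hw' hnd.2
          rw [conv_cons_other G s p q r t hpt hqt hrt _ rest hp hert]
          constructor
          · rw [isWalk_cons]
            constructor
            · rw [lift_src_ne G s r t e het her b, ← lift_src_ne G s p q e heq hp b]
              exact hsrc
            · rw [lift_dst_ne G s r t e het her b]
              exact ihw
          · simp only [List.map_cons, bind_cons']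
            have hfe : fE p q t e = [e] := by rw [fE, if_neg hp, if_neg het]
            simpa [hfe] using ihp.cons e


end ConvSpec


lemma mem_fE {p q t c e : E} (h : c ∈ fE p q t e) : c = e ∨ (c = q ∧ e = p) := by
  unfold fE at h
  split_ifs at h with h1 h2
  · rcases List.mem_pair.mp h with rfl | rfl
    · exact Or.inl h1.symm
    · exact Or.inr ⟨rfl, h1⟩
  · cases h
  · exact Or.inl (List.mem_singleton.mp h)

lemma bind_nodup {p q t : E} (hpq : p ≠ q) :
    ∀ L : List E, L.Nodup → (∀ c ∈ L, c ≠ q) → (L.flatMap (fE p q t)).Nodup := by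
  intro L
  induction L with
  | nil => intro _ _; simp
  | cons e L ihL =>
    intro hnd hq
    rw [bind_cons', List.nodup_append]
    obtain ⟨hel, hndL⟩ := List.nodup_cons.mp hnd
    refine ⟨?_, ihL hndL (fun c hc => hq c (List.mem_cons_of_mem _ hc)), ?_⟩
    · unfold fE
      split_ifs <;> simp [hpq]
    · intro c hc _ hc' rfl
      obtain ⟨e', he', hce'⟩ := List.mem_flatMap.mp hc'
      rcases mem_fE hc with h1 | ⟨h1, h1'⟩ <;> rcases mem_fE hce' with h2 | ⟨h2, h2'⟩
      · exact hel ((h1.symm.trans h2) ▸ he')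
      · exact hq e (List.mem_cons_self) (h1.symm.trans h2)
      · exact hq e' (List.mem_cons_of_mem _ he') (h2.symm.trans h1)
      · exact hel ((h2'.trans h1'.symm) ▸ he')

lemma bind_disjoint {p q t : E} (L1 L2 : List E) (hd : L1.Disjoint L2)
    (hq1 : ∀ c ∈ L1, c ≠ q) (hq2 : ∀ c ∈ L2, c ≠ q) :
    (L1.flatMap (fE p q t)).Disjoint (L2.flatMap (fE p q t)) := by
  intro c hc1 hc2
  obtain ⟨e1, he1, h1⟩ := List.mem_flatMap.mp hc1
  obtain ⟨e2, he2, h2⟩ := List.mem_flatMap.mp hc2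
  rcases mem_fE h1 with h1' | ⟨h1q, h1p⟩ <;> rcases mem_fE h2 with h2' | ⟨h2q, h2p⟩
  · exact hd he1 ((h1'.symm.trans h2') ▸ he2)
  · exact hq1 e1 he1 (h1'.symm.trans h2q)
  · exact hq2 e2 he2 (h2'.symm.trans h1q)
  · exact hd (h1p ▸ he1) (h2p ▸ he2)

lemma transfer {G : Multigraph V E} {s : V}
    (hloop : ∀ e, G.fst e ≠ G.snd e) {p q r t : E}
    (hps : G.Inc p s) (hqs : G.Inc q s) (hrs : G.Inc r s) (hts : G.Inc t s)
    (hpq : p ≠ q) (hpr : p ≠ r) (hpt : p ≠ t) (hqr : q ≠ r) (hqt : q ≠ t) (hrt : r ≠ t)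
    (hall : ∀ e, G.Inc e s → e = p ∨ e = q ∨ e = r ∨ e = t)
    (τ : V → V → ℕ) (hadm : G.Admissible s τ p q) : G.Admissible s τ r t := by
  intro x y hx hy
  obtain ⟨F, hF, hdisj⟩ := hadm x y hx hy
  have hU : ∀ i, (((F i).map fun st => st.1.1)).Nodup := by
    intro i
    have h1 : (((F i).map Prod.fst).map Subtype.val).Nodup :=
      (hF i).2.map Subtype.val_injective
    rwa [List.map_map] at h1
  have hmem : ∀ i c, c ∈ ((F i).map fun st => st.1.1) → c ≠ q := by
    intro i c hc
    obtain ⟨st, _, hst⟩ := List.mem_map.mp hc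
    exact hst ▸ st.1.2
  have hspec := fun i => conv_spec hloop hps hqs hrs hts hpq hpr hpt hqr hqt hrt hall y hy
    ((F i).length) (F i) le_rfl x hx (hF i).1 (hU i)
  refine ⟨fun i => conv G s p q r t hpt hqt hrt (F i), fun i => ?_, fun i j hij => ?_⟩
  · refine ⟨(hspec i).1, ?_⟩
    have hnd : ((conv G s p q r t hpt hqt hrt (F i)).map fun st => st.1.1).Nodup :=
      ((hspec i).2.nodup_iff).mpr (bind_nodup hpq _ (hU i) (hmem i))
    rw [show (fun (st : {e : E // e ≠ t} × Bool) => st.1.1) =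
      Subtype.val ∘ Prod.fst from rfl, ← List.map_map] at hnd
    exact hnd.of_map Subtype.val
  · -- disjointness
    have hdisj' : (((F i).map fun st => st.1.1)).Disjoint (((F j).map fun st => st.1.1)) := by
      intro c hc1 hc2
      obtain ⟨st1, hm1, hst1⟩ := List.mem_map.mp hc1
      obtain ⟨st2, hm2, hst2⟩ := List.mem_map.mp hc2
      have h12 : st1.1 = st2.1 := Subtype.ext (hst1.trans hst2.symm)
      exact hdisj i j hij (List.mem_map_of_mem (f := Prod.fst) hm1)
        (h12 ▸ List.mem_map_of_mem (f := Prod.fst) hm2)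
    have hbd := bind_disjoint (p := p) (q := q) (t := t) _ _ hdisj' (hmem i) (hmem j)
    intro a ha1 ha2
    have ha1' : a.1 ∈ ((conv G s p q r t hpt hqt hrt (F i)).map fun st => st.1.1) := by
      rw [show (fun (st : {e : E // e ≠ t} × Bool) => st.1.1) =
        Subtype.val ∘ Prod.fst from rfl, ← List.map_map]
      exact List.mem_map_of_mem (f := Subtype.val) ha1
    have ha2' : a.1 ∈ ((conv G s p q r t hpt hqt hrt (F j)).map fun st => st.1.1) := by
      rw [show (fun (st : {e : E // e ≠ t} × Bool) => st.1.1) =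
        Subtype.val ∘ Prod.fst from rfl, ← List.map_map]
      exact List.mem_map_of_mem (f := Subtype.val) ha2
    exact hbd (((hspec i).2.mem_iff).mp ha1') (((hspec j).2.mem_iff).mp ha2')


end LiftAux

open NW in
/-- With deg(s) = 4: if a pair at s is admissible then so is the complementary pair;
consequently the lifting graph is a union of perfect matchings. -/
theorem stmt6 {V E : Type} [Finite V] [Finite E] (G : Multigraph V E)
    (ℓ : ℕ) (hl : 4 ≤ ℓ)
    (A : Set V) (hA : A ≠ Set.univ)
    (hconnA : ∀ x y, x ∈ A → y ∈ A → G.ConnAtLeast x y ℓ)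
    (hedge : ∀ e, G.fst e ∈ A ∨ G.snd e ∈ A)
    (hloop : ∀ e, G.fst e ≠ G.snd e)
    (s : V) (hs : s ∉ A)
    (hbridge : ∀ e, G.Inc e s → ¬ G.IsBridge e)
    (hdeg : G.deg s = 4) :
    (∀ e1 e2 e3 e4 : {e : E // G.Inc e s},
      e1 ≠ e2 → e1 ≠ e3 → e1 ≠ e4 → e2 ≠ e3 → e2 ≠ e4 → e3 ≠ e4 →
      (∀ f, f = e1 ∨ f = e2 ∨ f = e3 ∨ f = e4) →
      (G.LiftingGraph s (Multigraph.tauA A ℓ)).Adj e1 e2 →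
      (G.LiftingGraph s (Multigraph.tauA A ℓ)).Adj e3 e4) ∧
    (∀ u v, (G.LiftingGraph s (Multigraph.tauA A ℓ)).Adj u v →
      ∃ m : {e : E // G.Inc e s} → {e : E // G.Inc e s}, Function.Involutive m ∧
        (∀ w, m w ≠ w) ∧ (∀ w, (G.LiftingGraph s (Multigraph.tauA A ℓ)).Adj w (m w)) ∧
        m u = v) := by
  classical
  have hv : ∀ (a b : {e : E // G.Inc e s}), a ≠ b → a.1 ≠ b.1 :=
    fun a b h hh => h (Subtype.ext hh)
  have part1 : ∀ e1 e2 e3 e4 : {e : E // G.Inc e s},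
      e1 ≠ e2 → e1 ≠ e3 → e1 ≠ e4 → e2 ≠ e3 → e2 ≠ e4 → e3 ≠ e4 →
      (∀ f, f = e1 ∨ f = e2 ∨ f = e3 ∨ f = e4) →
      (G.LiftingGraph s (Multigraph.tauA A ℓ)).Adj e1 e2 →
      (G.LiftingGraph s (Multigraph.tauA A ℓ)).Adj e3 e4 := by
    intro e1 e2 e3 e4 h12 h13 h14 h23 h24 h34 hcov hadj
    have hall : ∀ e, G.Inc e s → e = e1.1 ∨ e = e2.1 ∨ e = e3.1 ∨ e = e4.1 := by
      intro e he
      rcases hcov ⟨e, he⟩ with h | h | h | h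
      · exact Or.inl (congrArg Subtype.val h)
      · exact Or.inr (Or.inl (congrArg Subtype.val h))
      · exact Or.inr (Or.inr (Or.inl (congrArg Subtype.val h)))
      · exact Or.inr (Or.inr (Or.inr (congrArg Subtype.val h)))
    have hall' : ∀ e, G.Inc e s → e = e2.1 ∨ e = e1.1 ∨ e = e3.1 ∨ e = e4.1 := by
      intro e he
      rcases hall e he with h | h | h | h
      · exact Or.inr (Or.inl h)
      · exact Or.inl h
      · exact Or.inr (Or.inr (Or.inl h))
      · exact Or.inr (Or.inr (Or.inr h))
    have hadj' : e1 ≠ e2 ∧ (G.Admissible s (Multigraph.tauA A ℓ) e1.1 e2.1 ∨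
        G.Admissible s (Multigraph.tauA A ℓ) e2.1 e1.1) := hadj
    rcases hadj'.2 with hadm | hadm
    · exact ⟨h34, Or.inl (LiftAux.transfer hloop e1.2 e2.2 e3.2 e4.2 (hv _ _ h12)
        (hv _ _ h13) (hv _ _ h14) (hv _ _ h23) (hv _ _ h24) (hv _ _ h34) hall _ hadm)⟩
    · exact ⟨h34, Or.inl (LiftAux.transfer hloop e2.2 e1.2 e3.2 e4.2 (hv _ _ h12).symm
        (hv _ _ h23) (hv _ _ h24) (hv _ _ h13) (hv _ _ h14) (hv _ _ h34) hall' _ hadm)⟩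
  refine ⟨part1, ?_⟩
  intro u v huv
  have huv' : u ≠ v ∧ (G.Admissible s (Multigraph.tauA A ℓ) u.1 v.1 ∨
      G.Admissible s (Multigraph.tauA A ℓ) v.1 u.1) := huv
  have hne : u ≠ v := huv'.1
  -- the set of edges at s has exactly 4 elements
  have hSeq : {e : E | G.Inc e s} = {e | G.fst e = s} ∪ {e | G.snd e = s} := rfl
  have hS : ({e : E | G.Inc e s}).ncard = 4 := by
    rw [hSeq, Set.ncard_union_eq ?_ (Set.toFinite _) (Set.toFinite _)]
    · simpa [Multigraph.deg] using hdeg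
    · rw [Set.disjoint_left]
      intro e h1 h2
      exact hloop e (h1.trans h2.symm)
  have hsub : {u.1, v.1} ⊆ {e : E | G.Inc e s} := by
    rintro e (rfl | rfl)
    · exact u.2
    · exact v.2
  have hdiff : ({e : E | G.Inc e s} \ {u.1, v.1}).ncard = 2 := by
    rw [Set.ncard_diff hsub (Set.toFinite _), hS, Set.ncard_pair (hv _ _ hne)]
  obtain ⟨w1, w2, hw12, hset⟩ := Set.ncard_eq_two.mp hdiff
  have hw1m : w1 ∈ {e : E | G.Inc e s} \ {u.1, v.1} := by rw [hset]; exact Or.inl rfl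
  have hw2m : w2 ∈ {e : E | G.Inc e s} \ {u.1, v.1} := by rw [hset]; exact Or.inr rfl
  set W1 : {e : E // G.Inc e s} := ⟨w1, hw1m.1⟩ with hW1
  set W2 : {e : E // G.Inc e s} := ⟨w2, hw2m.1⟩ with hW2
  have hw1u : W1 ≠ u := fun h => hw1m.2 (Or.inl (congrArg Subtype.val h))
  have hw1v : W1 ≠ v := fun h => hw1m.2 (Or.inr (congrArg Subtype.val h))
  have hw2u : W2 ≠ u := fun h => hw2m.2 (Or.inl (congrArg Subtype.val h))
  have hw2v : W2 ≠ v := fun h => hw2m.2 (Or.inr (congrArg Subtype.val h))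
  have hW12 : W1 ≠ W2 := fun h => hw12 (congrArg Subtype.val h)
  have hcov : ∀ f : {e : E // G.Inc e s}, f = u ∨ f = v ∨ f = W1 ∨ f = W2 := by
    intro f
    by_cases h1 : f.1 = u.1
    · exact Or.inl (Subtype.ext h1)
    by_cases h2 : f.1 = v.1
    · exact Or.inr (Or.inl (Subtype.ext h2))
    have : f.1 ∈ {e : E | G.Inc e s} \ {u.1, v.1} := ⟨f.2, fun h => h.elim h1 h2⟩
    rw [hset] at this
    rcases this with h | h
    · exact Or.inr (Or.inr (Or.inl (Subtype.ext h)))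
    · exact Or.inr (Or.inr (Or.inr (Subtype.ext h)))
  have hadjW : (G.LiftingGraph s (Multigraph.tauA A ℓ)).Adj W1 W2 :=
    part1 u v W1 W2 hne hw1u.symm hw2u.symm hw1v.symm hw2v.symm hW12 hcov huv
  refine ⟨fun w => if w = u then v else if w = v then u else if w = W1 then W2 else W1,
    ?_, ?_, ?_, ?_⟩
  · intro w
    rcases hcov w with rfl | rfl | rfl | rfl <;>
      simp [hne, hne.symm, hw1u, hw1v, hw2u, hw2v, hW12, hW12.symm]
  · intro w
    rcases hcov w with rfl | rfl | rfl | rfl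
    · simp [hne, hne.symm]
    · simp [hne, hne.symm]
    · simp [hw1u, hw1v, hW12, hW12.symm]
    · simp [hw2u, hw2v, hW12, hW12.symm]
  · intro w
    rcases hcov w with rfl | rfl | rfl | rfl
    · simpa using huv
    · simpa [hne.symm] using huv.symm
    · simpa [hw1u, hw1v] using hadjW
    · simpa [hw2u, hw2v, hW12.symm] using hadjW.symm
  · simp
end
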